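/- arXiv:1711.10239 — 4 statements merged into one kernel-verified Lean document; each statement's English description precedes it below -/
import Mathlib

section
/- Q intertwines the grafting cut operators (Lemma 'lem:QMorphism', first identity, adjoint form): For every (𝔱,p) ∈ 𝒪 and every σ ∈ 𝔅 one has ⋖̂*_{(𝔱,p)}(Q σ) = (Q ⊗ Q)(⋖*_{(𝔱,p)} σ) in 𝕍 ⊗ 𝕍, where ⋖*_{(𝔱,p)} is the cutting operator on 𝔅-trees and ⋖̂*_{(𝔱,p)} the cutting operator on 𝒱-trees defined below. -/
/-
Common framework: multi-indices, the algebra of smooth functions on ℝ^𝒪,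
and the spaces of decorated trees 𝒱 and 𝔅 of [Bruned–Chandra–Chevyrev–Hairer,
"Renormalising SPDEs in regularity structures"], presented abstractly together
with the defining recursions of the various operators on them.
-/

open scoped BigOperators Classical

namespace SPDERenorm

/-! ### Multi-indices in `ℕ^{d+1}` -/

abbrev MIdx (d : ℕ) := Fin (d+1) → ℕ

/-- `k! = ∏ᵢ k[i]!`. -/
def mfact {d : ℕ} (k : MIdx d) : ℕ := ∏ i, Nat.factorial (k i)

/-- `C(k,ℓ) = ∏ᵢ binom(k[i], ℓ[i])`. -/
def mchoose {d : ℕ} (k l : MIdx d) : ℕ := ∏ i, Nat.choose (k i) (l i)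

/-- `|k| = Σᵢ k[i]`. -/
def msize {d : ℕ} (k : MIdx d) : ℕ := ∑ i, k i

/-- The unit multi-index `e_i`. -/
def munit {d : ℕ} (i : Fin (d+1)) : MIdx d := Pi.single i 1

/-- Sum of `f ℓ` over all multi-indices `ℓ ≤ m` (componentwise). -/
noncomputable def msum {d : ℕ} {A : Type*} [AddCommMonoid A] (m : MIdx d) (f : MIdx d → A) : A :=
  ∑ e : (∀ i : Fin (d+1), Fin (m i + 1)), f fun i => (e i : ℕ)

/-- The scaled size `|k|_𝔰 = Σᵢ k[i]·𝔰ᵢ`. -/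
noncomputable def wdeg {d : ℕ} (s : Fin (d+1) → ℝ) (k : MIdx d) : ℝ := ∑ i, (k i : ℝ) * s i

/-- The index set `𝒪 = 𝔏₊ × ℕ^{d+1}`. -/
abbrev Odx (Lp : Type) (d : ℕ) := Lp × MIdx d

/-! ### Functions on `ℝ^𝒪` and differential operators -/

/-- Real-valued functions on `ℝ^𝒪`. -/
abbrev FnO (Lp : Type) (d : ℕ) := (Odx Lp d → ℝ) → ℝ

/-- The coordinate function `𝒳_o`. -/
def Xc {Lp : Type} {d : ℕ} (o : Odx Lp d) : FnO Lp d := fun x => x o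

/-- The partial derivative `D_o` in the `o`-th coordinate. -/
noncomputable def Dpart {Lp : Type} {d : ℕ} [DecidableEq Lp] (o : Odx Lp d) (F : FnO Lp d) :
    FnO Lp d :=
  fun x => deriv (fun t : ℝ => F (Function.update x o t)) (x o)

/-- Iterated partial derivatives `D_{o₁} ∘ ⋯ ∘ D_{oₙ}` over a list. -/
noncomputable def Dlist {Lp : Type} {d : ℕ} [DecidableEq Lp] (L : List (Odx Lp d))
    (F : FnO Lp d) : FnO Lp d :=
  L.foldr Dpart F

/-- The derivation `∂_i F = Σ_{(𝔱,p)} 𝒳_{(𝔱,p+e_i)} · D_{(𝔱,p)} F`. -/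
noncomputable def pderivO {Lp : Type} {d : ℕ} [DecidableEq Lp] (i : Fin (d+1)) (F : FnO Lp d) :
    FnO Lp d :=
  fun x => ∑ᶠ o : Odx Lp d, Xc (o.1, o.2 + munit i) x * Dpart o F x

/-- `∂^k = ∏ᵢ ∂ᵢ^{k[i]}`. -/
noncomputable def mpderiv {Lp : Type} {d : ℕ} [DecidableEq Lp] (k : MIdx d) (F : FnO Lp d) :
    FnO Lp d :=
  (List.finRange (d+1)).foldr (fun i G => (pderivO i)^[k i] G) F

/-- `D^α` for a finitely supported `α ∈ ℕ^𝒪`. -/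
noncomputable def Dexp {Lp : Type} {d : ℕ} [DecidableEq Lp] (α : Odx Lp d →₀ ℕ)
    (F : FnO Lp d) : FnO Lp d :=
  Dlist (Finsupp.toMultiset α).toList F

/-- `α! = ∏_o α[o]!`. -/
def afact {Lp : Type} {d : ℕ} (α : Odx Lp d →₀ ℕ) : ℕ := α.prod fun _ n => Nat.factorial n

/-- The monomial `𝒳^α`. -/
noncomputable def Xpow {Lp : Type} {d : ℕ} (α : Odx Lp d →₀ ℕ) : FnO Lp d :=
  fun x => α.prod fun o n => x o ^ n

/-- `F` depends only on the coordinates in `s`. -/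
def DependsOnlyOn {Lp : Type} {d : ℕ} (F : FnO Lp d) (s : Set (Odx Lp d)) : Prop :=
  ∀ x y, (∀ o ∈ s, x o = y o) → F x = F y

/-- Membership in `𝒞_𝒪`: smooth functions depending on finitely many coordinates. -/
def IsSmoothCO {Lp : Type} {d : ℕ} (F : FnO Lp d) : Prop :=
  ∃ (s : Finset (Odx Lp d)) (g : (↥s → ℝ) → ℝ),
    ContDiff ℝ (⊤ : ℕ∞) g ∧ ∀ x, F x = g fun o => x o.1

/-- Membership in `𝒫 ⊆ 𝒞_𝒪` (relative to the partition `𝒪 = 𝒪₊ ⊔ 𝒪₋`). -/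
def IsP {Lp : Type} {d : ℕ} (Om Op : Set (Odx Lp d)) (F : FnO Lp d) : Prop :=
  ∃ (m : ℕ) (α : Fin m → (Odx Lp d →₀ ℕ)) (G : Fin m → FnO Lp d),
    Function.Injective α ∧
    (∀ j, ∀ o ∈ (α j).support, o ∈ Om) ∧
    (∀ j, IsSmoothCO (G j)) ∧
    (∀ j, G j ≠ 0) ∧
    (∀ j, DependsOnlyOn (G j) Op) ∧
    F = fun x => ∑ j, G j x * Xpow (α j) x

/-- `F` is a real polynomial in finitely many of the coordinate functions. -/
def IsPolyFn {Lp : Type} {d : ℕ} (F : FnO Lp d) : Prop :=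
  ∃ (s : Finset (Odx Lp d)) (P : MvPolynomial (↥s) ℝ),
    ∀ x, F x = MvPolynomial.eval (fun o => x o.1) P

/-! ### The trees of `𝒱` -/

/-- The set `𝒱` of decorated rooted trees, presented abstractly: a tree is uniquely
built from a root decoration `(𝔩,k) ∈ 𝔇 × ℕ^{d+1}` and a multiset of decorated branches,
and every tree arises this way (induction). -/
structure TreeV (Lp Dr : Type) (d : ℕ) where
  V : Type
  node : Dr → MIdx d → Multiset (Odx Lp d × V) → V
  node_bij : Function.Bijective
    (fun x : Dr × MIdx d × Multiset (Odx Lp d × V) => node x.1 x.2.1 x.2.2)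
  ind : ∀ P : V → Prop,
    (∀ l k (M : Multiset (Odx Lp d × V)), (∀ x ∈ M, P x.2) → P (node l k M)) → ∀ τ, P τ

namespace TreeV

variable {Lp Dr : Type} {d : ℕ} (S : TreeV Lp Dr d)

/-- Rebuild a tree after replacing the `j`-th branch by a linear combination of trees. -/
noncomputable def replace (l : Dr) (k : MIdx d) (L : List (Odx Lp d × S.V))
    (j : Fin L.length) (w : S.V →₀ ℝ) : S.V →₀ ℝ :=
  w.sum fun τ' c => Finsupp.single (S.node l k (↑(L.set j ((L.get j).1, τ')))) c

/-- Decomposition of a tree into its root decoration and branches. -/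
noncomputable def dec : S.V ≃ Dr × MIdx d × Multiset (Odx Lp d × S.V) :=
  (Equiv.ofBijective _ S.node_bij).symm

/-- The polynomial decoration at the root. -/
noncomputable def polyOf (τ : S.V) : MIdx d := (S.dec τ).2.1

/-- The multiset of branches at the root. -/
noncomputable def branchesOf (τ : S.V) : Multiset (Odx Lp d × S.V) := (S.dec τ).2.2

/-- The commutative tree product merging the roots of `g 0, …, g (n-1)`
(adding the polynomial decorations), the merged root receiving the driver label `l`. -/
noncomputable def merge (l : Dr) {n : ℕ} (g : Fin n → S.V) : S.V :=
  S.node l (∑ r, S.polyOf (g r)) (∑ r, S.branchesOf (g r))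

/-- Defining recursion of the grafting operators `⋖̂_o : 𝕍 ⊗ 𝕍 → 𝕍`. -/
def GraftSpec [DecidableEq Lp] (graft : Odx Lp d → S.V → S.V → (S.V →₀ ℝ)) : Prop :=
  ∀ (t : Lp) (p : MIdx d) (τ : S.V) (l : Dr) (k : MIdx d) (L : List (Odx Lp d × S.V)),
    graft (t, p) τ (S.node l k ↑L) =
      msum (k ⊓ p) (fun ℓ =>
        (mchoose k ℓ : ℝ) •
          Finsupp.single (S.node l (k - ℓ) (((t, p - ℓ), τ) ::ₘ (↑L : Multiset _))) 1)
      + ∑ j : Fin L.length, S.replace l k L j (graft (t, p) τ (L.get j).2)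

/-- Defining recursion of the symmetry factor `S(τ)`. -/
def SymSpec [DecidableEq Lp] [DecidableEq S.V] (sym : S.V → ℕ) : Prop :=
  ∀ (l : Dr) (k : MIdx d) (M : Multiset (Odx Lp d × S.V)),
    sym (S.node l k M) =
      mfact k * ∏ x ∈ M.toFinset, Nat.factorial (M.count x) * sym x.2 ^ M.count x

/-- Defining recursion of the inner product on `𝕍`. -/
def IPSpec (ip : S.V → S.V → ℝ) : Prop :=
  ∀ (l l' : Dr) (k k' : MIdx d) (L L' : List (Odx Lp d × S.V)),
    ip (S.node l k ↑L) (S.node l' k' ↑L') =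
      (if l = l' ∧ k = k' then (mfact k : ℝ) else 0) *
        ∑ s : Fin L.length ≃ Fin L'.length,
          ∏ j : Fin L.length,
            (if (L.get j).1 = (L'.get (s j)).1 then ip (L.get j).2 (L'.get (s j)).2 else 0)

/-- Defining recursion of `Υ^F`. -/
def UpsSpec [DecidableEq Lp] (F : Lp → Dr → FnO Lp d) (Ups : Lp → S.V → FnO Lp d) : Prop :=
  ∀ (t : Lp) (l : Dr) (k : MIdx d) (L : List (Odx Lp d × S.V)),
    Ups t (S.node l k ↑L) = fun x =>
      (∏ j : Fin L.length, Ups (L.get j).1.1 (L.get j).2 x) *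
        mpderiv k (Dlist (L.map Prod.fst) (F t l)) x

/-- Defining recursion of the raising operator `↑̂_i` on `𝕍`. -/
def RaiseSpec (raise : Fin (d+1) → S.V → (S.V →₀ ℝ)) : Prop :=
  ∀ (i : Fin (d+1)) (l : Dr) (k : MIdx d) (L : List (Odx Lp d × S.V)),
    raise i (S.node l k ↑L) =
      Finsupp.single (S.node l (k + munit i) ↑L) 1
      + ∑ j : Fin L.length, S.replace l k L j (raise i (L.get j).2)

/-- Defining recursion of the cutting operator `⋖̂*_o : 𝕍 → 𝕍 ⊗ 𝕍` (elements of
`𝕍 ⊗ 𝕍` represented as finitely supported functions on pairs of trees, a pair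
`(branch, trunk)` recording a cut). -/
def CutSpec [DecidableEq Lp] (cut : Odx Lp d → S.V → (S.V × S.V →₀ ℝ)) : Prop :=
  ∀ (t : Lp) (p : MIdx d) (l : Dr) (k : MIdx d) (L : List (Odx Lp d × S.V)),
    cut (t, p) (S.node l k ↑L) =
      (∑ j : Fin L.length,
        if (L.get j).1.1 = t ∧ (L.get j).1.2 ≤ p then
          ((mfact (p - (L.get j).1.2) : ℝ))⁻¹ •
            Finsupp.single ((L.get j).2,
              S.node l (k + (p - (L.get j).1.2)) ↑(L.eraseIdx j)) 1
        else 0)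
      + ∑ j : Fin L.length,
          (cut (t, p) (L.get j).2).sum fun ab c =>
            Finsupp.single (ab.1, S.node l k ↑(L.set j ((L.get j).1, ab.2))) c

/-- Defining recursion of the lowering operator `↑̂*_i` on `𝕍`. -/
def LowSpec (low : Fin (d+1) → S.V → (S.V →₀ ℝ)) : Prop :=
  ∀ (i : Fin (d+1)) (l : Dr) (k : MIdx d) (L : List (Odx Lp d × S.V)),
    low i (S.node l k ↑L) =
      (k i : ℝ) • Finsupp.single (S.node l (k - munit i) ↑L) 1
      + ∑ j : Fin L.length, S.replace l k L j (low i (L.get j).2)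

/-- Defining recursion of the predicate "`τ` is `𝔱`-non-vanishing for `F`". -/
def NVSpec [DecidableEq Lp] (F : Lp → Dr → FnO Lp d) (NV : Lp → S.V → Prop) : Prop :=
  ∀ (t : Lp) (l : Dr) (k : MIdx d) (L : List (Odx Lp d × S.V)),
    NV t (S.node l k ↑L) ↔
      (mpderiv k (Dlist (L.map Prod.fst) (F t l)) ≠ 0 ∧
        ∀ j : Fin L.length, NV (L.get j).1.1 (L.get j).2)

/-- The coefficient series of `U_o − u_o·𝟏`, for the jet `U` with Taylor coefficients `u`
and planted-tree coefficients `c_𝔱(τ)/S(τ)`. -/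
noncomputable def uSeries (z : Dr) (u : Odx Lp d → ℝ) (c : Lp → S.V → ℝ) (sym : S.V → ℕ)
    (o : Odx Lp d) (σ : S.V) : ℝ :=
  (∑ᶠ q : MIdx d, if q ≠ 0 ∧ σ = S.node z q 0 then u (o.1, o.2 + q) / (mfact q : ℝ) else 0) +
  ∑ᶠ τ : S.V, if σ = S.node z 0 {(o, τ)} then c o.1 τ / (sym τ : ℝ) else 0

/-- The coefficient series of the product `(U − u·𝟏)^α · Ξ_l`, expanded by multilinearity
using the commutative tree product merging the roots. -/
noncomputable def powCoef (coef : Odx Lp d → S.V → ℝ) (l : Dr) (α : Odx Lp d →₀ ℕ)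
    (σ : S.V) : ℝ :=
  ∑ᶠ g : Fin (Finsupp.toMultiset α).toList.length → S.V,
    (∏ r, coef ((Finsupp.toMultiset α).toList.get r) (g r)) *
      (if σ = S.merge l g then 1 else 0)

/-- The coefficient series of `Σ_{𝔩∈𝔇} F^𝔩_𝔱(U)·Ξ_𝔩`, where
`F^𝔩_𝔱(U)·Ξ_𝔩 = Σ_α (D^α F^𝔩_𝔱(u)/α!)·(U − u·𝟏)^α·Ξ_𝔩`. -/
noncomputable def lhsCoef [DecidableEq Lp] (F : Lp → Dr → FnO Lp d) (u : Odx Lp d → ℝ)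
    (coef : Odx Lp d → S.V → ℝ) (t : Lp) (σ : S.V) : ℝ :=
  ∑ᶠ l : Dr, ∑ᶠ α : Odx Lp d →₀ ℕ,
    Dexp α (F t l) u / (afact α : ℝ) * S.powCoef coef l α σ

/-- Defining recursion of the 𝔰-degree `|·|_𝔰` of decorated trees (with driver labels in
`𝔏₋ ⊔ {𝟎}`, encoded as `Option Lm` with `none = 𝟎`). -/
def DegSpec {Lm : Type} (S : TreeV Lp (Option Lm) d) (s : Fin (d+1) → ℝ)
    (degL : Lp → ℝ) (degLm : Lm → ℝ) (deg : S.V → ℝ) : Prop :=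
  ∀ (l : Option Lm) (k : MIdx d) (M : Multiset (Odx Lp d × S.V)),
    deg (S.node l k M) =
      l.elim 0 degLm + wdeg s k +
        ((M.map fun x => (degL x.1.1 - wdeg s x.1.2) + deg x.2).sum)

end TreeV

/-! ### The trees of `𝔅` -/

/-- Polynomial node-decoration factors `𝓘_{(𝔱,p)}[X^k]` with `p ≤ k` and `p ≠ k`;
an element is a pair `((𝔱,p), k)` subject to these constraints. -/
abbrev PolyDec (Lp : Type) (d : ℕ) :=
  {x : Odx Lp d × MIdx d // x.1.2 ≤ x.2 ∧ x.1.2 ≠ x.2}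

/-- Raise the polynomial exponent of a `PolyDec` by `e_i`. -/
def PolyDec.bump {Lp : Type} {d : ℕ} (pd : PolyDec Lp d) (i : Fin (d+1)) : PolyDec Lp d :=
  ⟨(pd.1.1, pd.1.2 + munit i), by
    constructor
    · exact fun j => le_trans (pd.2.1 j) (Nat.le_add_right _ _)
    · intro h
      have hi : pd.1.1.2 i ≤ pd.1.2 i := pd.2.1 i
      have h' : pd.1.1.2 i = pd.1.2 i + munit i i := congrFun h i
      simp only [munit, Pi.single_eq_same] at h'
      omega⟩

/-- The fresh polynomial decoration `𝓘_{(𝔱,p)}[X^{p+e_i}]`. -/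
def freshPD {Lp : Type} {d : ℕ} (o : Odx Lp d) (i : Fin (d+1)) : PolyDec Lp d :=
  ⟨(o, o.2 + munit i), by
    constructor
    · exact fun j => Nat.le_add_right _ _
    · intro h
      have h' : o.2 i = o.2 i + munit i i := congrFun h i
      simp only [munit, Pi.single_eq_same] at h'
      omega⟩

/-- Lower the polynomial exponent of a `PolyDec` by `e_i`. -/
def PolyDec.lower {Lp : Type} {d : ℕ} (pd : PolyDec Lp d) (i : Fin (d+1))
    (h : pd.1.1.2 + munit i ≤ pd.1.2) (hne : ¬ pd.1.2 - munit i = pd.1.1.2) : PolyDec Lp d :=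
  ⟨(pd.1.1, pd.1.2 - munit i), by
    constructor
    · intro j
      have hj := h j
      simp only [Pi.add_apply, Pi.sub_apply] at hj ⊢
      omega
    · exact fun hh => hne hh.symm⟩

/-- The set `𝔅` of decorated rooted trees with polynomial node decorations, presented
abstractly. -/
structure TreeB (Lp Dr : Type) (d : ℕ) where
  B : Type
  node : Dr → Multiset (PolyDec Lp d) → Multiset (Odx Lp d × B) → B
  node_bij : Function.Bijective
    (fun x : Dr × Multiset (PolyDec Lp d) × Multiset (Odx Lp d × B) => node x.1 x.2.1 x.2.2)
  ind : ∀ P : B → Prop,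
    (∀ l N (M : Multiset (Odx Lp d × B)), (∀ x ∈ M, P x.2) → P (node l N M)) → ∀ σ, P σ

namespace TreeB

variable {Lp Dr : Type} {d : ℕ} (S : TreeB Lp Dr d)

/-- Rebuild a tree after replacing the `j`-th branch by a linear combination of trees. -/
noncomputable def replace (l : Dr) (N : List (PolyDec Lp d)) (L : List (Odx Lp d × S.B))
    (j : Fin L.length) (w : S.B →₀ ℝ) : S.B →₀ ℝ :=
  w.sum fun σ' c => Finsupp.single (S.node l ↑N (↑(L.set j ((L.get j).1, σ')))) c

/-- Defining recursion of `Υ̊^F`. -/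
def UpsSpec [DecidableEq Lp] (F : Lp → Dr → FnO Lp d) (Ups : Lp → S.B → FnO Lp d) : Prop :=
  ∀ (t : Lp) (l : Dr) (N : List (PolyDec Lp d)) (L : List (Odx Lp d × S.B)),
    Ups t (S.node l ↑N ↑L) = fun x =>
      (∏ i : Fin N.length, x ((N.get i).1.1.1, (N.get i).1.2)) *
      (∏ j : Fin L.length, Ups (L.get j).1.1 (L.get j).2 x) *
      Dlist (N.map (fun pd => pd.1.1) ++ L.map Prod.fst) (F t l) x

/-- Defining recursion of the grafting operators `⋖_o` on `𝔅`. -/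
def GraftSpec (graft : Odx Lp d → S.B → S.B → (S.B →₀ ℝ)) : Prop :=
  ∀ (o : Odx Lp d) (σ' : S.B) (l : Dr) (N : List (PolyDec Lp d)) (L : List (Odx Lp d × S.B)),
    graft o σ' (S.node l ↑N ↑L) =
      Finsupp.single (S.node l ↑N ((o, σ') ::ₘ (↑L : Multiset _))) 1
      + (∑ j : Fin L.length, S.replace l N L j (graft o σ' (L.get j).2))
      + ∑ i : Fin N.length,
          (if o = ((N.get i).1.1.1, (N.get i).1.2) then
            Finsupp.single
              (S.node l ↑(N.eraseIdx i) (((N.get i).1.1, σ') ::ₘ (↑L : Multiset _))) 1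
          else 0)

/-- Defining recursion of the inner product on `𝔹`. -/
def IPSpec (ip : S.B → S.B → ℝ) : Prop :=
  ∀ (l l' : Dr) (N N' : List (PolyDec Lp d)) (L L' : List (Odx Lp d × S.B)),
    ip (S.node l ↑N ↑L) (S.node l' ↑N' ↑L') =
      (if l = l' then 1 else 0) *
      (∑ s : Fin N.length ≃ Fin N'.length,
        ∏ i : Fin N.length,
          (if (N.get i).1 = (N'.get (s i)).1 then
            (mfact ((N.get i).1.2 - (N.get i).1.1.2) : ℝ)
          else 0)) *
      ∑ s : Fin L.length ≃ Fin L'.length,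
        ∏ j : Fin L.length,
          (if (L.get j).1 = (L'.get (s j)).1 then ip (L.get j).2 (L'.get (s j)).2 else 0)

/-- Defining recursion of the raising operator `↑_i` on `𝔅`, producing a formal series
(represented by its coefficient function `𝔅 → ℝ`). -/
def RaiseSpec (raise : Fin (d+1) → S.B → (S.B → ℝ)) : Prop :=
  ∀ (i : Fin (d+1)) (l : Dr) (N : List (PolyDec Lp d)) (L : List (Odx Lp d × S.B)),
    raise i (S.node l ↑N ↑L) = fun σ'' =>
      (∑ ib : Fin N.length,
        (if σ'' = S.node l ↑(N.set ib ((N.get ib).bump i)) ↑L then 1 else 0))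
      + (if ∃ o : Odx Lp d, σ'' = S.node l (freshPD o i ::ₘ (↑N : Multiset _)) ↑L then 1 else 0)
      + ∑ j : Fin L.length,
          ∑ᶠ σ' : S.B,
            raise i (L.get j).2 σ' *
              (if σ'' = S.node l ↑N ↑(L.set j ((L.get j).1, σ')) then 1 else 0)

/-- Defining recursion of the lowering operator `↑*_i` on `𝔅`. -/
def LowSpec (low : Fin (d+1) → S.B → (S.B →₀ ℝ)) : Prop :=
  ∀ (i : Fin (d+1)) (l : Dr) (N : List (PolyDec Lp d)) (L : List (Odx Lp d × S.B)),
    low i (S.node l ↑N ↑L) =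
      (∑ ib : Fin N.length,
        (if h : (N.get ib).1.1.2 + munit i ≤ (N.get ib).1.2 then
          (((N.get ib).1.2 i - (N.get ib).1.1.2 i : ℕ) : ℝ) •
            (if he : (N.get ib).1.2 - munit i = (N.get ib).1.1.2 then
              Finsupp.single (S.node l ↑(N.eraseIdx ib) ↑L) 1
            else
              Finsupp.single (S.node l ↑(N.set ib ((N.get ib).lower i h he)) ↑L) 1)
        else 0))
      + ∑ j : Fin L.length, S.replace l N L j (low i (L.get j).2)

/-- Defining recursion of the cutting operator `⋖*_o : 𝔹 → 𝔹 ⊗ 𝔹` (elements of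
`𝔹 ⊗ 𝔹` represented as finitely supported functions on pairs of trees, a pair
`(branch, trunk)` recording a cut). -/
def CutSpec (cut : Odx Lp d → S.B → (S.B × S.B →₀ ℝ)) : Prop :=
  ∀ (t : Lp) (p : MIdx d) (l : Dr) (N : List (PolyDec Lp d)) (L : List (Odx Lp d × S.B)),
    cut (t, p) (S.node l ↑N ↑L) =
      (∑ j : Fin L.length,
        (if hc : (L.get j).1.1 = t ∧ (L.get j).1.2 ≤ p then
          ((mfact (p - (L.get j).1.2) : ℝ))⁻¹ •
            Finsupp.single ((L.get j).2,
              S.node l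
                (if he : (L.get j).1.2 = p then (↑N : Multiset (PolyDec Lp d))
                 else (⟨((L.get j).1, p), hc.2, he⟩ ::ₘ (↑N : Multiset (PolyDec Lp d))))
                ↑(L.eraseIdx j)) 1
        else 0))
      + ∑ j : Fin L.length,
          (cut (t, p) (L.get j).2).sum fun ab c =>
            Finsupp.single (ab.1, S.node l ↑N ↑(L.set j ((L.get j).1, ab.2))) c

end TreeB

/-- Defining recursion of the map `Q : 𝔹 → 𝕍` collapsing polynomial decorations. -/
def QSpec {Lp Dr : Type} {d : ℕ} (SB : TreeB Lp Dr d) (SV : TreeV Lp Dr d)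
    (Qf : SB.B → SV.V) : Prop :=
  ∀ (l : Dr) (N : Multiset (PolyDec Lp d)) (M : Multiset (Odx Lp d × SB.B)),
    Qf (SB.node l N M) =
      SV.node l ((N.map fun pd => pd.1.2 - pd.1.1.2).sum) (M.map fun x => (x.1, Qf x.2))

/-- The generic summand of the multivariate Faà di Bruno formula, indexed by `(r, q⃗, m⃗)`;
it vanishes unless `(q⃗, m⃗) ∈ I(r,k)`. -/
noncomputable def fdbSummand {Lp : Type} {d : ℕ} [DecidableEq Lp] (lo : LinearOrder (MIdx d))
    (F : FnO Lp d) (k : MIdx d)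
    (p : Σ r : ℕ, (Fin r → MIdx d) × (Fin r → (Odx Lp d →₀ ℕ))) : FnO Lp d :=
  if (∀ j, p.2.2 j ≠ 0) ∧ (∀ j j' : Fin p.1, j < j' → lo.lt (p.2.1 j) (p.2.1 j')) ∧
      (∀ j, lo.lt 0 (p.2.1 j)) ∧ (∑ j, ((p.2.2 j).sum fun _ n => n) • p.2.1 j) = k then
    fun x =>
      (∏ j, (p.2.2 j).prod fun o n =>
        (x (o.1, o.2 + p.2.1 j) / (mfact (p.2.1 j) : ℝ)) ^ n / (Nat.factorial n : ℝ)) *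
        Dexp (∑ j, p.2.2 j) F x
  else 0

/-! ### Generic decorated trees -/

/-- Decorated rooted trees over node species `N` and edge species `E`,
presented abstractly. -/
structure GTree (N E : Type) where
  T : Type
  node : N → Multiset (E × T) → T
  node_bij : Function.Bijective (fun x : N × Multiset (E × T) => node x.1 x.2)
  ind : ∀ P : T → Prop, (∀ Y M, (∀ x ∈ M, P x.2) → P (node Y M)) → ∀ τ, P τ

namespace GTree

/-- Multilinear expansion of a list of edge-decorated linear combinations of trees into a
linear combination of branch multisets. -/
noncomputable def expandAux {N E : Type} (S : GTree N E) :
    List (E × (S.T →₀ ℝ)) → (Multiset (E × S.T) →₀ ℝ)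
  | [] => Finsupp.single 0 1
  | (e, w) :: L =>
      w.sum fun τ' c => (S.expandAux L).sum fun M c' => Finsupp.single ((e, τ') ::ₘ M) (c * c')

/-- Defining recursion of the functorial extension `𝔗(A)` of a linear map `A` between
the free vector spaces on the node species. -/
def MapSpec {N N' E : Type} (S : GTree N E) (S' : GTree N' E)
    (A : N → (N' →₀ ℝ)) (TA : S.T → (S'.T →₀ ℝ)) : Prop :=
  ∀ (Y : N) (L : List (E × S.T)),
    TA (S.node Y ↑L) =
      (A Y).sum fun Y' c =>
        (S'.expandAux (L.map fun x => (x.1, TA x.2))).sum fun M c' =>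
          Finsupp.single (S'.node Y' M) (c * c')

/-- Defining recursion of the inner product on `𝔗(𝖭,𝖤)` induced by an inner product on
the node species. -/
def IPSpec {N E : Type} (S : GTree N E) (ipN : N → N → ℝ) (ip : S.T → S.T → ℝ) : Prop :=
  ∀ (Y Y' : N) (L L' : List (E × S.T)),
    ip (S.node Y ↑L) (S.node Y' ↑L') =
      ipN Y Y' * ∑ s : Fin L.length ≃ Fin L'.length,
        ∏ j : Fin L.length,
          (if (L.get j).1 = (L'.get (s j)).1 then ip (L.get j).2 (L'.get (s j)).2 else 0)

end GTree

private lemma eraseIdx_map_aux {α β : Type*} (f : α → β) :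
    ∀ (L : List α) (n : ℕ), (L.map f).eraseIdx n = (L.eraseIdx n).map f := by
  intro L
  induction L with
  | nil => intro n; simp
  | cons a L ih =>
      intro n
      cases n with
      | zero => simp
      | succ n => simp [List.eraseIdx_cons_succ, ih n]

/-- Lemma `lem:QMorphism`, first identity, adjoint form: `Q` intertwines
the grafting cut operators: `⋖̂*_{(𝔱,p)}(Qσ) = (Q ⊗ Q)(⋖*_{(𝔱,p)} σ)` in `𝕍 ⊗ 𝕍`. -/
theorem statement6
    {d : ℕ} {Lp Dr : Type} [Fintype Lp] [DecidableEq Lp]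
    (SB : TreeB Lp Dr d) (SV : TreeV Lp Dr d)
    (Qf : SB.B → SV.V) (hQ : QSpec SB SV Qf)
    (cutB : Odx Lp d → SB.B → (SB.B × SB.B →₀ ℝ)) (hcutB : SB.CutSpec cutB)
    (cutV : Odx Lp d → SV.V → (SV.V × SV.V →₀ ℝ)) (hcutV : SV.CutSpec cutV) :
    ∀ (o : Odx Lp d) (σ : SB.B),
      cutV o (Qf σ) = Finsupp.mapDomain (Prod.map Qf Qf) (cutB o σ) := by
  intro o σ
  obtain ⟨t, p⟩ := o
  induction σ using SB.ind with
  | _ l N M IH =>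
    obtain ⟨LN, rfl⟩ : ∃ LN : List (PolyDec Lp d), (↑LN : Multiset (PolyDec Lp d)) = N :=
      Quotient.exists_rep N
    obtain ⟨L, rfl⟩ : ∃ L : List (Odx Lp d × SB.B), (↑L : Multiset (Odx Lp d × SB.B)) = M :=
      Quotient.exists_rep M
    set f : Odx Lp d × SB.B → Odx Lp d × SV.V := fun x => (x.1, Qf x.2) with hf
    set g : SB.B × SB.B → SV.V × SV.V := Prod.map Qf Qf with hg
    set k : MIdx d :=
      ((Multiset.map (fun pd => pd.1.2 - pd.1.1.2) (↑LN : Multiset (PolyDec Lp d)))).sum with hk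
    have hQnode : ∀ (L' : List (Odx Lp d × SB.B)),
        Qf (SB.node l ↑LN ↑L') = SV.node l k ↑(L'.map f) := by
      intro L'
      rw [hQ, hk, Multiset.map_coe, Multiset.map_coe]
    rw [hQnode, hcutV, hcutB, Finsupp.mapDomain_add,
      ← Finsupp.mapDomain.addMonoidHom_apply g, ← Finsupp.mapDomain.addMonoidHom_apply g,
      map_sum, map_sum]
    have hlen : (L.map f).length = L.length := List.length_map f
    congr 1
    · -- first sums: cuts at root edges
      refine Fintype.sum_equiv (finCongr hlen) _ _ ?_
      intro j
      have hj : (j : ℕ) < L.length := hlen ▸ j.2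
      have hget : (L.map f).get j = f (L.get ⟨j, hj⟩) := by simp
      rw [Finsupp.mapDomain.addMonoidHom_apply]
      set x := L.get ⟨j, hj⟩ with hx
      have hgc : L.get (finCongr hlen j) = x := rfl
      simp only [hget, hgc]
      by_cases hc : x.1.1 = t ∧ x.1.2 ≤ p
      · rw [if_pos hc, dif_pos hc, Finsupp.mapDomain_smul, Finsupp.mapDomain_single]
        congr 2
        show (Qf x.2, SV.node l (k + (p - x.1.2)) ↑((L.map f).eraseIdx (j : ℕ)))
            = (Qf x.2, Qf (SB.node l _ ↑(L.eraseIdx (j : ℕ))))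
        congr 1
        by_cases he : x.1.2 = p
        · rw [dif_pos he, hQnode]
          congr 2
          · rw [he, tsub_self, add_zero]
          · rw [eraseIdx_map_aux]
        · rw [dif_neg he, hQ]
          congr 1
          · rw [Multiset.map_cons, Multiset.sum_cons]
            show k + (p - x.1.2) = (p - x.1.2) + k
            rw [add_comm]
          · rw [Multiset.map_coe, eraseIdx_map_aux]
      · rw [if_neg hc, dif_neg hc, Finsupp.mapDomain_zero]
    · -- second sums: cuts in the branches
      refine Fintype.sum_equiv (finCongr hlen) _ _ ?_
      intro j
      have hj : (j : ℕ) < L.length := hlen ▸ j.2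
      have hget : (L.map f).get j = f (L.get ⟨j, hj⟩) := by simp
      rw [Finsupp.mapDomain.addMonoidHom_apply]
      set x := L.get ⟨j, hj⟩ with hx
      have hgc : L.get (finCongr hlen j) = x := rfl
      simp only [hget, hgc]
      rw [Finsupp.mapDomain_sum]
      have hIH : cutV (t, p) (Qf x.2) = Finsupp.mapDomain g (cutB (t, p) x.2) :=
        IH x (List.get_mem L _)
      show (cutV (t, p) (f x).2).sum _ = _
      rw [show (f x).2 = Qf x.2 from rfl, hIH,
        Finsupp.sum_mapDomain_index (by intro b; simp) (by intro b m₁ m₂; simp)]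
      refine Finsupp.sum_congr ?_
      intro ab _
      rw [Finsupp.mapDomain_single]
      congr 1
      show ((g ab).1, SV.node l k ↑((L.map f).set (j : ℕ) ((f x).1, (g ab).2)))
          = (Qf ab.1, Qf (SB.node l ↑LN ↑(L.set (j : ℕ) (x.1, ab.2))))
      congr 1
      rw [hQnode]
      congr 2
      rw [List.map_set]
      rfl

end SPDERenorm
end

section
/- Q intertwines the lowering operators (Lemma 'lem:QMorphism', second identity, adjoint form): For every l ∈ {0,…,d} and every σ ∈ 𝔅 one has ↑̂*_l(Q σ) = Q(↑*_l σ) in 𝕍, where ↑*_l is the lowering operator on 𝔅-trees and ↑̂*_l the lowering operator on 𝒱-trees defined below. -/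
/-
Common framework: multi-indices, the algebra of smooth functions on ℝ^𝒪,
and the spaces of decorated trees 𝒱 and 𝔅 of [Bruned–Chandra–Chevyrev–Hairer,
"Renormalising SPDEs in regularity structures"], presented abstractly together
with the defining recursions of the various operators on them.
-/

open scoped BigOperators Classical

namespace SPDERenorm

/-! ### Auxiliary lemmas for Statement 7 -/

section Statement7Aux

variable {α : Type*} {M : Type*} [AddCommMonoid M]

private lemma listSum_fin_get (l : List α) (f : α → M) :
    (∑ j : Fin l.length, f (l.get j)) = (l.map f).sum := by
  induction l with
  | nil => simp
  | cons a t ih =>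
    have h := Fin.sum_univ_succ (fun j : Fin (t.length + 1) => f ((a :: t).get j))
    rw [show (∑ j : Fin (a :: t).length, f ((a :: t).get j)) =
      ∑ j : Fin (t.length + 1), f ((a :: t).get j) from rfl, h]
    show f a + ∑ j : Fin t.length, f (t.get j) = _
    rw [ih, List.map_cons, List.sum_cons]

private lemma listSum_eraseIdx (g : α → M) :
    ∀ (l : List α) (n : ℕ) (hn : n < l.length),
      (l.map g).sum = g (l[n]'hn) + ((l.eraseIdx n).map g).sum
  | [], n, hn => by simp at hn
  | a :: t, 0, _ => by simp
  | a :: t, n + 1, hn => by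
    have ih := listSum_eraseIdx g t n (by simpa using hn)
    simp only [List.map_cons, List.sum_cons, List.eraseIdx_cons_succ,
      List.getElem_cons_succ, ih]
    exact add_left_comm _ _ _

private lemma listSum_set (g : α → M) :
    ∀ (l : List α) (n : ℕ) (_ : n < l.length) (a : α),
      ((l.set n a).map g).sum = g a + ((l.eraseIdx n).map g).sum
  | [], n, hn, _ => by simp at hn
  | b :: t, 0, _, a => by simp
  | b :: t, n + 1, hn, a => by
    have ih := listSum_set g t n (by simpa using hn) a
    simp only [List.set_cons_succ, List.map_cons, List.sum_cons, List.eraseIdx_cons_succ, ih]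
    exact add_left_comm _ _ _

private lemma listSum_apply {ι : Type*} {β : ι → Type*} [∀ i, AddCommMonoid (β i)]
    (l : List (∀ i, β i)) (i : ι) : l.sum i = (l.map fun k => k i).sum := by
  induction l with
  | nil => simp
  | cons a t ih => simp [ih]

private lemma mapDomain_finsetSum {α β ι : Type*} (f : α → β) (s : Finset ι)
    (h : ι → α →₀ ℝ) :
    Finsupp.mapDomain f (∑ x ∈ s, h x) = ∑ x ∈ s, Finsupp.mapDomain f (h x) :=
  map_sum (Finsupp.mapDomain.addMonoidHom f) h s

private lemma Qnode {d : ℕ} {Lp Dr : Type} (SB : TreeB Lp Dr d) (SV : TreeV Lp Dr d)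
    (Qf : SB.B → SV.V) (hQ : QSpec SB SV Qf) (l : Dr) (Nl : List (PolyDec Lp d))
    (L' : List (Odx Lp d × SB.B)) :
    Qf (SB.node l ↑Nl ↑L') =
      SV.node l ((Nl.map fun pd => pd.1.2 - pd.1.1.2).sum)
        ↑(L'.map fun x => (x.1, Qf x.2)) := by
  rw [hQ, Multiset.map_coe, Multiset.map_coe, Multiset.sum_coe]

private lemma replace_mapDomain {d : ℕ} {Lp Dr : Type} (SB : TreeB Lp Dr d)
    (SV : TreeV Lp Dr d) (Qf : SB.B → SV.V) (hQ : QSpec SB SV Qf) (l : Dr)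
    (Nl : List (PolyDec Lp d)) (Ll : List (Odx Lp d × SB.B)) (j : Fin Ll.length)
    (w : SB.B →₀ ℝ) :
    Finsupp.mapDomain Qf (SB.replace l Nl Ll j w) =
      SV.replace l ((Nl.map fun pd => pd.1.2 - pd.1.1.2).sum)
        (Ll.map fun x => (x.1, Qf x.2))
        (Fin.cast (List.length_map (as := Ll) _).symm j)
        (Finsupp.mapDomain Qf w) := by
  unfold TreeB.replace TreeV.replace
  rw [Finsupp.mapDomain_sum,
    Finsupp.sum_mapDomain_index (fun _ => Finsupp.single_zero _)
      (fun _ _ _ => Finsupp.single_add _ _ _)]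
  refine Finsupp.sum_congr fun σ' _ => ?_
  rw [Finsupp.mapDomain_single, Qnode SB SV Qf hQ]
  have h1 : ((Ll.map fun x => (x.1, Qf x.2)).get
      (Fin.cast (List.length_map (as := Ll) _).symm j)).1 = (Ll.get j).1 := by
    simp [List.get_eq_getElem, List.getElem_map]
  rw [List.map_set, h1]
  rfl

end Statement7Aux

/-- Lemma `lem:QMorphism`, second identity, adjoint form: `Q` intertwines
the lowering operators: `↑̂*_l(Qσ) = Q(↑*_l σ)` in `𝕍`. -/
theorem statement7
    {d : ℕ} {Lp Dr : Type} [Fintype Lp] [DecidableEq Lp]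
    (SB : TreeB Lp Dr d) (SV : TreeV Lp Dr d)
    (Qf : SB.B → SV.V) (hQ : QSpec SB SV Qf)
    (lowB : Fin (d+1) → SB.B → (SB.B →₀ ℝ)) (hlowB : SB.LowSpec lowB)
    (lowV : Fin (d+1) → SV.V → (SV.V →₀ ℝ)) (hlowV : SV.LowSpec lowV) :
    ∀ (i : Fin (d+1)) (σ : SB.B),
      lowV i (Qf σ) = Finsupp.mapDomain Qf (lowB i σ) := by
  intro i σ
  refine SB.ind (fun σ => lowV i (Qf σ) = Finsupp.mapDomain Qf (lowB i σ)) ?_ σ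
  intro l N M hIH
  obtain ⟨Nl, rfl⟩ : ∃ x : List (PolyDec Lp d), N = ↑x :=
    ⟨N.toList, (Multiset.coe_toList N).symm⟩
  obtain ⟨Ll, rfl⟩ : ∃ x : List (Odx Lp d × SB.B), M = ↑x :=
    ⟨M.toList, (Multiset.coe_toList M).symm⟩
  rw [Qnode SB SV Qf hQ, hlowV, hlowB, Finsupp.mapDomain_add, mapDomain_finsetSum,
    mapDomain_finsetSum]
  congr 1
  · -- the root terms
    have hKi : ((Nl.map fun pd : PolyDec Lp d => pd.1.2 - pd.1.1.2).sum) i =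
        ∑ ib : Fin Nl.length, ((Nl.get ib).1.2 - (Nl.get ib).1.1.2) i := by
      rw [listSum_apply, List.map_map, ← listSum_fin_get]
      rfl
    rw [hKi, Nat.cast_sum, Finset.sum_smul]
    refine Finset.sum_congr rfl fun ib _ => ?_
    by_cases h : (Nl.get ib).1.1.2 + munit i ≤ (Nl.get ib).1.2
    · rw [dif_pos h]
      have hle := (Nl.get ib).2.1
      by_cases he : (Nl.get ib).1.2 - munit i = (Nl.get ib).1.1.2
      · rw [dif_pos he, Finsupp.mapDomain_smul, Finsupp.mapDomain_single,
          Qnode SB SV Qf hQ]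
        have hgpd : (Nl.get ib).1.2 - (Nl.get ib).1.1.2 = munit i := by
          funext j
          have h1 : (Nl.get ib).1.1.2 j + munit i j ≤ (Nl.get ib).1.2 j := h j
          have h2 := congrFun he j
          have h3 : (Nl.get ib).1.1.2 j ≤ (Nl.get ib).1.2 j := hle j
          rcases eq_or_ne j i with rfl | hne
          · simp only [Pi.add_apply, munit, Pi.single_eq_same, Pi.sub_apply] at h1 h2 ⊢
            omega
          · simp only [Pi.add_apply, munit, Pi.single_eq_of_ne hne, Pi.sub_apply] at h1 h2 ⊢
            omega
        have hsum : ((Nl.eraseIdx ↑ib).map fun pd => pd.1.2 - pd.1.1.2).sum =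
            ((Nl.map fun pd => pd.1.2 - pd.1.1.2).sum) - munit i := by
          have hsplit := listSum_eraseIdx (fun pd : PolyDec Lp d => pd.1.2 - pd.1.1.2)
            Nl ib ib.isLt
          rw [hsplit]
          rw [show (Nl[(ib : ℕ)].1.2 - Nl[(ib : ℕ)].1.1.2) = munit i from hgpd,
            add_tsub_cancel_left]
        rw [hsum]
        rfl
      · rw [dif_neg he, Finsupp.mapDomain_smul, Finsupp.mapDomain_single,
          Qnode SB SV Qf hQ]
        have hsum : (((Nl.set (↑ib) ((Nl.get ib).lower i h he)).map
              fun pd => pd.1.2 - pd.1.1.2).sum) =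
            ((Nl.map fun pd => pd.1.2 - pd.1.1.2).sum) - munit i := by
          have hset := listSum_set (fun pd : PolyDec Lp d => pd.1.2 - pd.1.1.2)
            Nl ib ib.isLt ((Nl.get ib).lower i h he)
          have hsplit := listSum_eraseIdx (fun pd : PolyDec Lp d => pd.1.2 - pd.1.1.2)
            Nl ib ib.isLt
          rw [hset, hsplit]
          have e1 : ((Nl.get ib).lower i h he).1.2 = (Nl.get ib).1.2 - munit i := rfl
          have e2 : ((Nl.get ib).lower i h he).1.1.2 = (Nl.get ib).1.1.2 := rfl
          have e3 : Nl[(ib : ℕ)] = Nl.get ib := rfl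
          rw [e1, e2, e3]
          funext j
          have h1 : (Nl.get ib).1.1.2 j + munit i j ≤ (Nl.get ib).1.2 j := h j
          have h3 : (Nl.get ib).1.1.2 j ≤ (Nl.get ib).1.2 j := hle j
          rcases eq_or_ne j i with rfl | hne
          · simp only [munit, Pi.single_eq_same, Pi.add_apply, Pi.sub_apply] at h1 ⊢
            omega
          · simp only [munit, Pi.single_eq_of_ne hne, Pi.add_apply, Pi.sub_apply] at h1 ⊢
            omega
        rw [hsum]
        rfl
    · rw [dif_neg h, Finsupp.mapDomain_zero]
      have hle := (Nl.get ib).2.1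
      have hki : (Nl.get ib).1.2 i ≤ (Nl.get ib).1.1.2 i := by
        by_contra hc
        refine h fun j => ?_
        have h3 : (Nl.get ib).1.1.2 j ≤ (Nl.get ib).1.2 j := hle j
        rcases eq_or_ne j i with rfl | hne
        · simp only [Pi.add_apply, munit, Pi.single_eq_same]
          omega
        · simp only [Pi.add_apply, munit, Pi.single_eq_of_ne hne]
          omega
      have : ((Nl.get ib).1.2 - (Nl.get ib).1.1.2) i = 0 := by
        have h4 : (Nl.get ib).1.1.2 i ≤ (Nl.get ib).1.2 i := hle i
        simp only [Pi.sub_apply]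
        omega
      rw [this, Nat.cast_zero, zero_smul]
  · -- the recursive terms
    refine (Fintype.sum_equiv
      (finCongr (List.length_map (as := Ll) (fun x => (x.1, Qf x.2))).symm) _ _ fun j => ?_).symm
    have hget : ((Ll.map fun x => (x.1, Qf x.2)).get
        (finCongr (List.length_map (as := Ll) (fun x => (x.1, Qf x.2))).symm j)).2 =
        Qf (Ll.get j).2 := by
      simp [List.get_eq_getElem, List.getElem_map]
    have hIH' : lowV i (Qf (Ll.get j).2) = Finsupp.mapDomain Qf (lowB i (Ll.get j).2) :=
      hIH (Ll.get j) (Multiset.mem_coe.mpr (List.get_mem Ll j))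
    rw [hget, hIH', replace_mapDomain SB SV Qf hQ]
    rfl

end SPDERenorm
end

section
/- Raising morphism property of Υ (Corollary 'cor:graftMorphismSmall', second identity): For every family F = (F^𝔩_𝔱)_{𝔱∈𝔏₊,𝔩∈𝔇} with every F^𝔩_𝔱 ∈ 𝒫, every i ∈ {0,…,d}, and every τ ∈ 𝒱, one has ∂_i Υ^F[τ] = Υ^F[↑̂_i τ], where ∂_i acts componentwise on 𝒫^{𝔏₊} and Υ^F is extended linearly to 𝕍. -/
/-
Common framework: multi-indices, the algebra of smooth functions on ℝ^𝒪,
and the spaces of decorated trees 𝒱 and 𝔅 of [Bruned–Chandra–Chevyrev–Hairer,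
"Renormalising SPDEs in regularity structures"], presented abstractly together
with the defining recursions of the various operators on them.
-/

open scoped BigOperators Classical

namespace SPDERenorm

/-! ### Auxiliary lemmas for statement 9 -/

section Aux
set_option linter.unusedSectionVars false

variable {Lp : Type} {d : ℕ} [DecidableEq Lp]

/-- `F` is a smooth function of the coordinates in `s`. -/
def NiceOn (s : Finset (Odx Lp d)) (F : FnO Lp d) : Prop :=
  ∃ g : (↥s → ℝ) → ℝ, ContDiff ℝ (⊤ : ℕ∞) g ∧ ∀ x, F x = g fun o => x o.1

/-- `Nice` is the same as `IsSmoothCO`. -/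
def Nice (F : FnO Lp d) : Prop := ∃ s, NiceOn s F

lemma NiceOn.mono {s t : Finset (Odx Lp d)} {F : FnO Lp d} (h : NiceOn s F) (hst : s ⊆ t) :
    NiceOn t F := by
  obtain ⟨g, hg, hFg⟩ := h
  refine ⟨fun y => g (fun o => y ⟨o.1, hst o.2⟩), ?_, fun x => hFg x⟩
  exact hg.comp (contDiff_pi.2 fun o => (ContinuousLinearMap.proj (R := ℝ)
    (φ := fun _ : ↥t => ℝ) ⟨o.1, hst o.2⟩).contDiff)

lemma niceOn_const (s : Finset (Odx Lp d)) (c : ℝ) : NiceOn s (fun _ => c) :=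
  ⟨fun _ => c, contDiff_const, fun _ => rfl⟩

lemma nice_const (c : ℝ) : Nice (fun _ : Odx Lp d → ℝ => c) := ⟨∅, niceOn_const _ _⟩

lemma NiceOn.add {s : Finset (Odx Lp d)} {F G : FnO Lp d} (hF : NiceOn s F) (hG : NiceOn s G) :
    NiceOn s (fun x => F x + G x) := by
  obtain ⟨g₁, hg₁, h₁⟩ := hF; obtain ⟨g₂, hg₂, h₂⟩ := hG
  exact ⟨fun y => g₁ y + g₂ y, hg₁.add hg₂, fun x => by change F x + G x = _; rw [h₁ x, h₂ x]⟩

lemma NiceOn.mul {s : Finset (Odx Lp d)} {F G : FnO Lp d} (hF : NiceOn s F) (hG : NiceOn s G) :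
    NiceOn s (fun x => F x * G x) := by
  obtain ⟨g₁, hg₁, h₁⟩ := hF; obtain ⟨g₂, hg₂, h₂⟩ := hG
  exact ⟨fun y => g₁ y * g₂ y, hg₁.mul hg₂, fun x => by change F x * G x = _; rw [h₁ x, h₂ x]⟩

lemma Nice.add {F G : FnO Lp d} (hF : Nice F) (hG : Nice G) : Nice (fun x => F x + G x) := by
  obtain ⟨s, hF⟩ := hF; obtain ⟨t, hG⟩ := hG
  exact ⟨s ∪ t, (hF.mono Finset.subset_union_left).add (hG.mono Finset.subset_union_right)⟩

lemma Nice.mul {F G : FnO Lp d} (hF : Nice F) (hG : Nice G) : Nice (fun x => F x * G x) := by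
  obtain ⟨s, hF⟩ := hF; obtain ⟨t, hG⟩ := hG
  exact ⟨s ∪ t, (hF.mono Finset.subset_union_left).mul (hG.mono Finset.subset_union_right)⟩

lemma nice_sum {ι : Type*} (u : Finset ι) (f : ι → FnO Lp d) (h : ∀ j ∈ u, Nice (f j)) :
    Nice (fun x => ∑ j ∈ u, f j x) := by
  classical
  induction u using Finset.cons_induction with
  | empty => simpa using nice_const 0
  | cons a u ha ih =>
      simp only [Finset.sum_cons]
      exact (h a (Finset.mem_cons_self a u)).add (ih fun j hj => h j (Finset.mem_cons_of_mem hj))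

lemma nice_prod {ι : Type*} (u : Finset ι) (f : ι → FnO Lp d) (h : ∀ j ∈ u, Nice (f j)) :
    Nice (fun x => ∏ j ∈ u, f j x) := by
  classical
  induction u using Finset.cons_induction with
  | empty => simpa using nice_const 1
  | cons a u ha ih =>
      simp only [Finset.prod_cons]
      exact (h a (Finset.mem_cons_self a u)).mul (ih fun j hj => h j (Finset.mem_cons_of_mem hj))

lemma niceOn_Xc (o : Odx Lp d) : NiceOn {o} (Xc o) :=
  ⟨fun y => y ⟨o, Finset.mem_singleton_self o⟩,
    (ContinuousLinearMap.proj (R := ℝ) (φ := fun _ : ({o} : Finset (Odx Lp d)) => ℝ)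
      ⟨o, Finset.mem_singleton_self o⟩).contDiff, fun _ => rfl⟩

lemma nice_pow (o : Odx Lp d) (n : ℕ) : Nice (fun x => x o ^ n) :=
  ⟨{o}, fun y => y ⟨o, Finset.mem_singleton_self o⟩ ^ n,
    (ContinuousLinearMap.proj (R := ℝ) (φ := fun _ : ({o} : Finset (Odx Lp d)) => ℝ)
      ⟨o, Finset.mem_singleton_self o⟩).contDiff.pow n, fun _ => rfl⟩

lemma nice_Xpow (α : Odx Lp d →₀ ℕ) : Nice (Xpow α) := by
  have h : Xpow α = fun x => ∏ o ∈ α.support, x o ^ α o := rfl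
  rw [h]
  exact nice_prod _ _ fun o _ => nice_pow o (α o)

lemma hasDerivAt_update {ι : Type*} [DecidableEq ι] [Fintype ι] (y : ι → ℝ) (a : ι) (t : ℝ) :
    HasDerivAt (fun t => Function.update y a t) (Pi.single a 1) t := by
  rw [hasDerivAt_pi]
  intro i
  rcases eq_or_ne i a with rfl | hne
  · simp only [Function.update_self, Pi.single_eq_same]
    exact hasDerivAt_id t
  · simp only [Function.update_of_ne hne, Pi.single_eq_of_ne hne]
    exact hasDerivAt_const t (y i)

lemma proj_update_mem {s : Finset (Odx Lp d)} (x : Odx Lp d → ℝ) {o : Odx Lp d} (ho : o ∈ s)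
    (t : ℝ) :
    (fun o' : ↥s => Function.update x o t o'.1) =
      Function.update (fun o' : ↥s => x o'.1) ⟨o, ho⟩ t := by
  funext o'
  rcases eq_or_ne o' ⟨o, ho⟩ with rfl | hne
  · simp
  · have h1 : (o' : Odx Lp d) ≠ o := fun h => hne (Subtype.ext h)
    simp [Function.update_of_ne h1, Function.update_of_ne hne]

lemma proj_update_not_mem {s : Finset (Odx Lp d)} (x : Odx Lp d → ℝ) {o : Odx Lp d} (ho : o ∉ s)
    (t : ℝ) :
    (fun o' : ↥s => Function.update x o t o'.1) = fun o' : ↥s => x o'.1 := by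
  funext o'
  exact Function.update_of_ne (fun h => ho (by rw [← h]; exact o'.2)) _ _

/-- Partial derivative of a function on a finite-dimensional coordinate space. -/
noncomputable def pdg {s : Finset (Odx Lp d)} (g : (↥s → ℝ) → ℝ) (a : ↥s) : (↥s → ℝ) → ℝ :=
  fun y => fderiv ℝ g y (Pi.single a 1)

lemma pdg_contDiff {s : Finset (Odx Lp d)} {g : (↥s → ℝ) → ℝ} (hg : ContDiff ℝ (⊤ : ℕ∞) g)
    (a : ↥s) : ContDiff ℝ (⊤ : ℕ∞) (pdg g a) :=
  (hg.fderiv_right (by exact_mod_cast le_top)).clm_apply contDiff_const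

lemma dpart_hasDerivAt_of_mem {s : Finset (Odx Lp d)} {F : FnO Lp d} {g : (↥s → ℝ) → ℝ}
    (hg : ContDiff ℝ (⊤ : ℕ∞) g) (hFg : ∀ x, F x = g fun o : ↥s => x o.1)
    {o : Odx Lp d} (ho : o ∈ s) (x : Odx Lp d → ℝ) :
    HasDerivAt (fun t => F (Function.update x o t)) (pdg g ⟨o, ho⟩ fun o' : ↥s => x o'.1)
      (x o) := by
  set y : ↥s → ℝ := fun o' => x o'.1 with hy
  have hcomp : (fun t => F (Function.update x o t)) =
      fun t => g (Function.update y ⟨o, ho⟩ t) := by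
    funext t; rw [hFg, proj_update_mem x ho t]
  rw [hcomp]
  have h1 : HasDerivAt (fun t => Function.update y ⟨o, ho⟩ t) (Pi.single ⟨o, ho⟩ 1) (x o) :=
    hasDerivAt_update y _ (x o)
  have hyy : Function.update y ⟨o, ho⟩ (x o) = y := Function.update_eq_self _ _
  have h2 : HasFDerivAt g (fderiv ℝ g y) (Function.update y ⟨o, ho⟩ (x o)) := by
    rw [hyy]; exact ((hg.differentiable (by simp)) y).hasFDerivAt
  have h3 := h2.comp_hasDerivAt (x o) h1
  exact h3

lemma dpart_apply_of_mem {s : Finset (Odx Lp d)} {F : FnO Lp d} {g : (↥s → ℝ) → ℝ}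
    (hg : ContDiff ℝ (⊤ : ℕ∞) g) (hFg : ∀ x, F x = g fun o : ↥s => x o.1)
    {o : Odx Lp d} (ho : o ∈ s) (x : Odx Lp d → ℝ) :
    Dpart o F x = pdg g ⟨o, ho⟩ fun o' : ↥s => x o'.1 :=
  (dpart_hasDerivAt_of_mem hg hFg ho x).deriv

lemma NiceOn.dpart_of_not_mem {s : Finset (Odx Lp d)} {F : FnO Lp d} (h : NiceOn s F)
    {o : Odx Lp d} (ho : o ∉ s) : Dpart o F = 0 := by
  obtain ⟨g, hg, hFg⟩ := h
  funext x
  have hcomp : (fun t => F (Function.update x o t)) = fun _ => g fun o' : ↥s => x o'.1 := by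
    funext t; rw [hFg, proj_update_not_mem x ho t]
  show deriv (fun t => F (Function.update x o t)) (x o) = 0
  rw [hcomp, deriv_const]

lemma NiceOn.hasDerivAt {s : Finset (Odx Lp d)} {F : FnO Lp d} (h : NiceOn s F)
    (o : Odx Lp d) (x : Odx Lp d → ℝ) :
    HasDerivAt (fun t => F (Function.update x o t)) (Dpart o F x) (x o) := by
  obtain ⟨g, hg, hFg⟩ := h
  by_cases ho : o ∈ s
  · have h1 := dpart_hasDerivAt_of_mem hg hFg ho x
    rwa [← dpart_apply_of_mem hg hFg ho x] at h1
  · have h0 : Dpart o F = 0 := NiceOn.dpart_of_not_mem ⟨g, hg, hFg⟩ ho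
    rw [h0]
    have hcomp : (fun t => F (Function.update x o t)) = fun _ => g fun o' : ↥s => x o'.1 := by
      funext t; rw [hFg, proj_update_not_mem x ho t]
    rw [hcomp]
    exact hasDerivAt_const _ _

lemma Nice.hasDerivAt {F : FnO Lp d} (h : Nice F) (o : Odx Lp d) (x : Odx Lp d → ℝ) :
    HasDerivAt (fun t => F (Function.update x o t)) (Dpart o F x) (x o) := by
  obtain ⟨s, hs⟩ := h; exact hs.hasDerivAt o x

lemma NiceOn.dpart {s : Finset (Odx Lp d)} {F : FnO Lp d} (h : NiceOn s F) (o : Odx Lp d) :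
    NiceOn s (Dpart o F) := by
  obtain ⟨g, hg, hFg⟩ := h
  by_cases ho : o ∈ s
  · exact ⟨pdg g ⟨o, ho⟩, pdg_contDiff hg _, fun x => dpart_apply_of_mem hg hFg ho x⟩
  · have h0 : Dpart o F = 0 := NiceOn.dpart_of_not_mem ⟨g, hg, hFg⟩ ho
    exact ⟨fun _ => 0, contDiff_const, fun x => by rw [h0]; rfl⟩

lemma Nice.dpart {F : FnO Lp d} (h : Nice F) (o : Odx Lp d) : Nice (Dpart o F) := by
  obtain ⟨s, hs⟩ := h; exact ⟨s, hs.dpart o⟩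

lemma dpart_zero (o : Odx Lp d) : Dpart o (0 : FnO Lp d) = 0 := by
  funext x
  show deriv (fun _ => (0:ℝ)) (x o) = 0
  rw [deriv_const]

lemma dpart_mul {F G : FnO Lp d} (hF : Nice F) (hG : Nice G) (o : Odx Lp d) :
    Dpart o (fun x => F x * G x) = fun x => Dpart o F x * G x + F x * Dpart o G x := by
  funext x
  have h1 := hF.hasDerivAt o x
  have h2 := hG.hasDerivAt o x
  have h3 := h1.mul h2
  have h4 : Function.update x o (x o) = x := Function.update_eq_self o x
  rw [h4] at h3
  exact h3.deriv

lemma dpart_add {F G : FnO Lp d} (hF : Nice F) (hG : Nice G) (o : Odx Lp d) :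
    Dpart o (fun x => F x + G x) = fun x => Dpart o F x + Dpart o G x := by
  funext x
  exact ((hF.hasDerivAt o x).add (hG.hasDerivAt o x)).deriv

lemma NiceOn.pderivO_eq {s : Finset (Odx Lp d)} {F : FnO Lp d} (h : NiceOn s F)
    (i : Fin (d+1)) :
    pderivO i F = fun x => ∑ o ∈ s, x (o.1, o.2 + munit i) * Dpart o F x := by
  funext x
  show ∑ᶠ o : Odx Lp d, Xc (o.1, o.2 + munit i) x * Dpart o F x = _
  refine finsum_eq_finset_sum_of_support_subset _ fun o ho => ?_
  simp only [Function.mem_support, ne_eq] at ho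
  by_contra hos
  exact ho (by rw [h.dpart_of_not_mem hos]; simp)

lemma pderivO_const (i : Fin (d+1)) (c : ℝ) :
    pderivO (Lp := Lp) (d := d) i (fun _ => c) = fun _ => 0 := by
  have h := (niceOn_const (∅ : Finset (Odx Lp d)) c).pderivO_eq i
  simpa using h

lemma nice_pderivO {F : FnO Lp d} (h : Nice F) (i : Fin (d+1)) : Nice (pderivO i F) := by
  obtain ⟨s, hs⟩ := h
  rw [hs.pderivO_eq i]
  exact nice_sum s _ fun o _ => Nice.mul ⟨{(o.1, o.2 + munit i)}, niceOn_Xc _⟩ ⟨s, hs.dpart o⟩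

lemma pderivO_add {F G : FnO Lp d} (hF : Nice F) (hG : Nice G) (i : Fin (d+1)) :
    pderivO i (fun x => F x + G x) = fun x => pderivO i F x + pderivO i G x := by
  obtain ⟨s, hF⟩ := hF; obtain ⟨t, hG⟩ := hG
  have hF' := hF.mono (Finset.subset_union_left (s₂ := t))
  have hG' := hG.mono (Finset.subset_union_right (s₁ := s))
  rw [(hF'.add hG').pderivO_eq i, hF'.pderivO_eq i, hG'.pderivO_eq i]
  funext x
  simp only
  rw [← Finset.sum_add_distrib]
  refine Finset.sum_congr rfl fun o _ => ?_
  rw [dpart_add ⟨_, hF'⟩ ⟨_, hG'⟩]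
  ring

lemma pderivO_mul {F G : FnO Lp d} (hF : Nice F) (hG : Nice G) (i : Fin (d+1)) :
    pderivO i (fun x => F x * G x) =
      fun x => pderivO i F x * G x + F x * pderivO i G x := by
  obtain ⟨s, hF⟩ := hF; obtain ⟨t, hG⟩ := hG
  have hF' := hF.mono (Finset.subset_union_left (s₂ := t))
  have hG' := hG.mono (Finset.subset_union_right (s₁ := s))
  rw [(hF'.mul hG').pderivO_eq i, hF'.pderivO_eq i, hG'.pderivO_eq i]
  funext x
  simp only
  rw [Finset.sum_mul, Finset.mul_sum, ← Finset.sum_add_distrib]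
  refine Finset.sum_congr rfl fun o _ => ?_
  rw [dpart_mul ⟨_, hF'⟩ ⟨_, hG'⟩]
  ring

lemma pderivO_sum {ι : Type*} (u : Finset ι) (f : ι → FnO Lp d) (h : ∀ j ∈ u, Nice (f j))
    (i : Fin (d+1)) :
    pderivO i (fun x => ∑ j ∈ u, f j x) = fun x => ∑ j ∈ u, pderivO i (f j) x := by
  classical
  induction u using Finset.cons_induction with
  | empty => simp only [Finset.sum_empty]; exact pderivO_const i 0
  | cons a u ha ih =>
      simp only [Finset.sum_cons]
      rw [pderivO_add (h a (Finset.mem_cons_self a u))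
        (nice_sum u f fun j hj => h j (Finset.mem_cons_of_mem hj)) i,
        ih fun j hj => h j (Finset.mem_cons_of_mem hj)]

lemma pderivO_coord (o' : Odx Lp d) (i : Fin (d+1)) :
    pderivO i (fun x => x o') = fun x => x (o'.1, o'.2 + munit i) := by
  show pderivO i (Xc o') = _
  rw [(niceOn_Xc o').pderivO_eq i]
  funext x
  rw [Finset.sum_singleton]
  have h1 : Dpart o' (Xc o') x = 1 := by
    show deriv (fun t => Function.update x o' t o') (x o') = 1
    simp
  rw [h1, mul_one]

lemma fderiv_fderiv_symm {E : Type*} [NormedAddCommGroup E] [NormedSpace ℝ E] {g : E → ℝ}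
    (hg : ContDiff ℝ (⊤ : ℕ∞) g) (y v w : E) :
    fderiv ℝ (fun z => fderiv ℝ g z v) y w = fderiv ℝ (fun z => fderiv ℝ g z w) y v := by
  have hd : Differentiable ℝ (fderiv ℝ g) :=
    (hg.fderiv_right (m := (⊤ : ℕ∞)) (by exact_mod_cast le_top)).differentiable
      (by simp)
  have h1 : ∀ u : E, fderiv ℝ (fun z => fderiv ℝ g z u) y =
      (fderiv ℝ (fderiv ℝ g) y).flip u := by
    intro u
    have h := fderiv_clm_apply (hd y) (differentiableAt_const u)
    simpa using h
  rw [h1 v, h1 w]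
  have hsymm := second_derivative_symmetric (f' := fderiv ℝ g)
    (f'' := fderiv ℝ (fderiv ℝ g) y)
    (fun z => ((hg.differentiable (by simp)) z).hasFDerivAt)
    ((hd y).hasFDerivAt) w v
  simpa using hsymm

lemma NiceOn.dpart_comm {s : Finset (Odx Lp d)} {F : FnO Lp d} (h : NiceOn s F)
    (o o' : Odx Lp d) : Dpart o' (Dpart o F) = Dpart o (Dpart o' F) := by
  by_cases ho : o ∈ s
  · by_cases ho' : o' ∈ s
    · obtain ⟨g, hg, hFg⟩ := h
      have e1 : ∀ x, Dpart o F x = pdg g ⟨o, ho⟩ fun o'' : ↥s => x o''.1 :=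
        fun x => dpart_apply_of_mem hg hFg ho x
      have e2 : ∀ x, Dpart o' F x = pdg g ⟨o', ho'⟩ fun o'' : ↥s => x o''.1 :=
        fun x => dpart_apply_of_mem hg hFg ho' x
      funext x
      rw [dpart_apply_of_mem (pdg_contDiff hg ⟨o, ho⟩) e1 ho' x,
        dpart_apply_of_mem (pdg_contDiff hg ⟨o', ho'⟩) e2 ho x]
      exact fderiv_fderiv_symm hg _ _ _
    · rw [(h.dpart o).dpart_of_not_mem ho', h.dpart_of_not_mem ho', dpart_zero]
  · rw [h.dpart_of_not_mem ho, dpart_zero, (h.dpart o').dpart_of_not_mem ho]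

lemma Nice.pderivO_comm {F : FnO Lp d} (h : Nice F) (i j : Fin (d+1)) :
    pderivO i (pderivO j F) = pderivO j (pderivO i F) := by
  obtain ⟨s, hs⟩ := h
  have hper : ∀ (i j : Fin (d+1)) (o : Odx Lp d),
      pderivO i (fun x => x (o.1, o.2 + munit j) * Dpart o F x) =
        fun x => x (o.1, o.2 + munit j + munit i) * Dpart o F x
          + ∑ o' ∈ s, x (o.1, o.2 + munit j) *
              (x (o'.1, o'.2 + munit i) * Dpart o' (Dpart o F) x) := by
    intro i j o
    rw [pderivO_mul (F := fun x => x (o.1, o.2 + munit j))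
      ⟨{(o.1, o.2 + munit j)}, niceOn_Xc _⟩ ⟨s, hs.dpart o⟩ i]
    funext x
    rw [pderivO_coord (o.1, o.2 + munit j) i, (hs.dpart o).pderivO_eq i]
    simp only [Finset.mul_sum]
  have key : ∀ i j : Fin (d+1), pderivO i (pderivO j F) = fun x =>
      (∑ o ∈ s, x (o.1, o.2 + munit j + munit i) * Dpart o F x)
        + ∑ o ∈ s, ∑ o' ∈ s, x (o.1, o.2 + munit j) *
            (x (o'.1, o'.2 + munit i) * Dpart o' (Dpart o F) x) := by
    intro i j
    rw [hs.pderivO_eq j,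
      pderivO_sum s _ (fun o _ => Nice.mul (F := fun x => x (o.1, o.2 + munit j))
        ⟨{(o.1, o.2 + munit j)}, niceOn_Xc _⟩ ⟨s, hs.dpart o⟩) i]
    funext x
    rw [← Finset.sum_add_distrib]
    refine Finset.sum_congr rfl fun o _ => ?_
    rw [hper i j o]
  rw [key i j, key j i]
  funext x
  congr 1
  · exact Finset.sum_congr rfl fun o _ => by rw [add_right_comm]
  · rw [Finset.sum_comm]
    refine Finset.sum_congr rfl fun a _ => Finset.sum_congr rfl fun b _ => ?_
    rw [hs.dpart_comm b a]
    ring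

lemma nice_iterate {F : FnO Lp d} (h : Nice F) (j : Fin (d+1)) (n : ℕ) :
    Nice ((pderivO j)^[n] F) := by
  induction n with
  | zero => simpa using h
  | succ n ih => rw [Function.iterate_succ_apply']; exact nice_pderivO ih j

lemma pderivO_iterate {F : FnO Lp d} (h : Nice F) (i j : Fin (d+1)) (n : ℕ) :
    pderivO i ((pderivO j)^[n] F) = (pderivO j)^[n] (pderivO i F) := by
  induction n with
  | zero => rfl
  | succ n ih =>
      rw [Function.iterate_succ_apply', Function.iterate_succ_apply',
        (nice_iterate h j n).pderivO_comm i j, ih]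

lemma nice_foldrIt (ℓ : List (Fin (d+1))) (k : MIdx d) {F : FnO Lp d} (h : Nice F) :
    Nice (ℓ.foldr (fun j G => (pderivO j)^[k j] G) F) := by
  induction ℓ with
  | nil => exact h
  | cons a ℓ ih => exact nice_iterate ih a (k a)

lemma foldr_congr (ℓ : List (Fin (d+1))) (k k' : MIdx d) (F : FnO Lp d)
    (h : ∀ j ∈ ℓ, k j = k' j) :
    ℓ.foldr (fun j G => (pderivO j)^[k j] G) F =
      ℓ.foldr (fun j G => (pderivO j)^[k' j] G) F := by
  induction ℓ with
  | nil => rfl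
  | cons a ℓ ih =>
      simp only [List.foldr_cons]
      rw [ih fun j hj => h j (List.mem_cons_of_mem a hj), h a List.mem_cons_self]

lemma pderivO_foldr {F : FnO Lp d} (h : Nice F) (k : MIdx d) (i : Fin (d+1)) :
    ∀ ℓ : List (Fin (d+1)), i ∈ ℓ → ℓ.Nodup →
      pderivO i (ℓ.foldr (fun j G => (pderivO j)^[k j] G) F) =
        ℓ.foldr (fun j G => (pderivO j)^[(k + munit i) j] G) F := by
  intro ℓ
  induction ℓ with
  | nil => intro h'; simp at h'
  | cons a ℓ ih =>
      intro hmem hnd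
      simp only [List.foldr_cons]
      rcases List.mem_cons.1 hmem with rfl | hmem'
      · have hni : i ∉ ℓ := (List.nodup_cons.1 hnd).1
        have h1 : (k + munit i) i = k i + 1 := by
          simp [munit, Pi.single_eq_same]
        rw [h1, ← Function.iterate_succ_apply' (pderivO i) (k i)]
        congr 1
        exact foldr_congr ℓ k (k + munit i) F fun j hj => by
          have : j ≠ i := fun h' => hni (h' ▸ hj)
          simp [munit, Pi.single_eq_of_ne this]
      · have hne : a ≠ i := fun h' => (List.nodup_cons.1 hnd).1 (h' ▸ hmem')
        rw [pderivO_iterate (nice_foldrIt ℓ k h) i a (k a),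
          ih hmem' (List.nodup_cons.1 hnd).2]
        have h2 : (k + munit i) a = k a := by
          simp [munit, Pi.single_eq_of_ne hne]
        rw [h2]

lemma pderivO_mpderiv {F : FnO Lp d} (h : Nice F) (i : Fin (d+1)) (k : MIdx d) :
    pderivO i (mpderiv k F) = mpderiv (k + munit i) F :=
  pderivO_foldr h k i (List.finRange (d+1)) (List.mem_finRange i) (List.nodup_finRange _)

lemma nice_dlist (L : List (Odx Lp d)) {F : FnO Lp d} (h : Nice F) : Nice (Dlist L F) := by
  induction L with
  | nil => exact h
  | cons a L ih => exact Nice.dpart ih a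

lemma nice_mpderiv (k : MIdx d) {F : FnO Lp d} (h : Nice F) : Nice (mpderiv k F) :=
  nice_foldrIt _ _ h

lemma IsP.nice {Om Op : Set (Odx Lp d)} {F : FnO Lp d} (h : IsP Om Op F) : Nice F := by
  obtain ⟨m, α, G, _, _, hsm, _, _, hFeq⟩ := h
  rw [hFeq]
  refine nice_sum Finset.univ _ fun j _ => Nice.mul ?_ (nice_Xpow (α j))
  obtain ⟨s, g, hg, hGg⟩ := hsm j
  exact ⟨s, g, hg, hGg⟩

lemma nice_Ups {Dr : Type} {Om Op : Set (Odx Lp d)} (F : Lp → Dr → FnO Lp d)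
    (hF : ∀ t l, IsP Om Op (F t l)) (S : TreeV Lp Dr d)
    (Ups : Lp → S.V → FnO Lp d) (hUps : S.UpsSpec F Ups) :
    ∀ τ t, Nice (Ups t τ) := by
  refine S.ind (fun τ => ∀ t, Nice (Ups t τ)) ?_
  intro l k M hIH t
  obtain ⟨L, rfl⟩ : ∃ L : List (Odx Lp d × S.V), (↑L : Multiset (Odx Lp d × S.V)) = M :=
    ⟨M.toList, Multiset.coe_toList M⟩
  rw [hUps t l k L]
  refine Nice.mul (nice_prod Finset.univ _ fun j _ => ?_)
    (nice_mpderiv _ (nice_dlist _ (hF t l).nice))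
  exact hIH (L.get j) (Multiset.mem_coe.2 (L.get_mem _)) (L.get j).1.1

lemma pderivO_prod {ι : Type*} [DecidableEq ι] (u : Finset ι) (f : ι → FnO Lp d)
    (h : ∀ j ∈ u, Nice (f j)) (i : Fin (d+1)) :
    pderivO i (fun x => ∏ j ∈ u, f j x) =
      fun x => ∑ j ∈ u, pderivO i (f j) x * ∏ j' ∈ u.erase j, f j' x := by
  induction u using Finset.cons_induction with
  | empty => simp only [Finset.prod_empty, Finset.sum_empty]; exact pderivO_const i 1
  | cons a u ha ih =>
      simp only [Finset.prod_cons]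
      rw [pderivO_mul (h a (Finset.mem_cons_self a u))
        (nice_prod u f fun j hj => h j (Finset.mem_cons_of_mem hj)) i,
        ih fun j hj => h j (Finset.mem_cons_of_mem hj)]
      funext x
      rw [Finset.sum_cons, Finset.erase_cons]
      congr 1
      rw [Finset.mul_sum]
      refine Finset.sum_congr rfl fun j hj => ?_
      have hja : j ≠ a := fun h' => ha (h' ▸ hj)
      rw [Finset.erase_cons_of_ne ha hja.symm, Finset.prod_cons]
      ring

lemma map_fst_set {β γ : Type*} (L : List (γ × β)) (j : Fin L.length) (τ' : β) :
    (L.set j.1 ((L.get j).1, τ')).map Prod.fst = L.map Prod.fst := by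
  apply List.ext_getElem (by simp)
  intro n h1 h2
  simp only [List.getElem_map, List.getElem_set]
  split
  · next heq => subst heq; simp [List.get_eq_getElem]
  · rfl

lemma prod_fin_set {β : Type*} (L : List β) (j : Fin L.length) (a : β) (g : β → ℝ) :
    (∏ j' : Fin (L.set j.1 a).length, g ((L.set j.1 a).get j')) =
      g a * ∏ j' ∈ Finset.univ.erase j, g (L.get j') := by
  have hlen : (L.set j.1 a).length = L.length := List.length_set
  rw [Fintype.prod_equiv (finCongr hlen) (fun j' => g ((L.set j.1 a).get j'))
      (fun j'' => if j'' = j then g a else g (L.get j'')) ?_]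
  · rw [← Finset.mul_prod_erase Finset.univ _ (Finset.mem_univ j), if_pos rfl]
    congr 1
    exact Finset.prod_congr rfl fun j'' hj'' => if_neg (Finset.ne_of_mem_erase hj'')
  · intro j'
    simp only [List.get_eq_getElem, List.getElem_set, finCongr_apply, Fin.coe_cast]
    rcases eq_or_ne (j.1 : ℕ) (j'.1 : ℕ) with heq | hne
    · rw [if_pos heq, if_pos (by exact Fin.ext heq.symm)]
    · rw [if_neg hne, if_neg (fun h => hne (by simpa using congrArg Fin.val h.symm))]

end Aux

/-- Corollary `cor:graftMorphismSmall`, second identity: the raising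
morphism property of `Υ`: `∂_i Υ^F[τ] = Υ^F[↑̂_i τ]` componentwise, where `Υ^F` is
extended linearly. -/
theorem statement9
    {d : ℕ} {Lp Dr : Type} [Fintype Lp] [DecidableEq Lp]
    (Om Op : Set (Odx Lp d))
    (hdisj : ∀ o, ¬(o ∈ Om ∧ o ∈ Op)) (hcover : ∀ o, o ∈ Om ∨ o ∈ Op)
    (F : Lp → Dr → FnO Lp d) (hF : ∀ t l, IsP Om Op (F t l))
    (S : TreeV Lp Dr d)
    (Ups : Lp → S.V → FnO Lp d) (hUps : S.UpsSpec F Ups)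
    (raiseV : Fin (d+1) → S.V → (S.V →₀ ℝ)) (hraiseV : S.RaiseSpec raiseV) :
    ∀ (i : Fin (d+1)) (τ : S.V) (t : Lp),
      pderivO i (Ups t τ) = fun x => (raiseV i τ).sum fun τ'' c => c * Ups t τ'' x := by
  intro i
  have hnice : ∀ τ t, Nice (Ups t τ) := nice_Ups F hF S Ups hUps
  refine S.ind (fun τ => ∀ t : Lp,
    pderivO i (Ups t τ) = fun x => (raiseV i τ).sum fun τ'' c => c * Ups t τ'' x) ?_
  intro l k M hIH t
  obtain ⟨L, rfl⟩ : ∃ L : List (Odx Lp d × S.V), (↑L : Multiset (Odx Lp d × S.V)) = M :=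
    ⟨M.toList, Multiset.coe_toList M⟩
  have hQn : Nice (mpderiv k (Dlist (L.map Prod.fst) (F t l))) :=
    nice_mpderiv _ (nice_dlist _ (hF t l).nice)
  have hPn : ∀ j ∈ (Finset.univ : Finset (Fin L.length)),
      Nice ((fun j : Fin L.length => Ups (L.get j).1.1 (L.get j).2) j) :=
    fun j _ => hnice _ _
  rw [hUps t l k L, hraiseV i l k L]
  rw [pderivO_mul (F := fun x => ∏ j : Fin L.length, Ups (L.get j).1.1 (L.get j).2 x)
        (G := mpderiv k (Dlist (L.map Prod.fst) (F t l)))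
        (nice_prod Finset.univ _ hPn) hQn i]
  rw [pderivO_prod Finset.univ (fun j : Fin L.length => Ups (L.get j).1.1 (L.get j).2) hPn i]
  rw [pderivO_mpderiv (nice_dlist _ (hF t l).nice) i k]
  funext x
  have h0 : ∀ τ'' : S.V, (fun (τ'' : S.V) (c : ℝ) => c * Ups t τ'' x) τ'' 0 = 0 :=
    fun τ'' => zero_mul _
  have hadd : ∀ (τ'' : S.V) (b₁ b₂ : ℝ),
      (fun (τ'' : S.V) (c : ℝ) => c * Ups t τ'' x) τ'' (b₁ + b₂) =
        (fun (τ'' : S.V) (c : ℝ) => c * Ups t τ'' x) τ'' b₁ +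
          (fun (τ'' : S.V) (c : ℝ) => c * Ups t τ'' x) τ'' b₂ :=
    fun τ'' b₁ b₂ => add_mul _ _ _
  rw [Finsupp.sum_add_index' h0 hadd, Finsupp.sum_single_index (h0 _),
    ← Finsupp.sum_finset_sum_index h0 hadd]
  simp only [hUps t l (k + munit i) L]
  have hrep : ∀ j : Fin L.length,
      (S.replace l k L j (raiseV i (L.get j).2)).sum (fun τ'' c => c * Ups t τ'' x) =
        (raiseV i (L.get j).2).sum fun τ' c =>
          c * Ups t (S.node l k ↑(L.set j.1 ((L.get j).1, τ'))) x := by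
    intro j
    show ((raiseV i (L.get j).2).sum fun τ' c =>
        Finsupp.single (S.node l k ↑(L.set j.1 ((L.get j).1, τ'))) c).sum
          (fun τ'' c => c * Ups t τ'' x) = _
    rw [Finsupp.sum_sum_index h0 hadd]
    exact Finsupp.sum_congr fun τ' _ => Finsupp.sum_single_index (h0 _)
  simp only [hrep]
  have hups' : ∀ (j : Fin L.length) (τ' : S.V),
      Ups t (S.node l k ↑(L.set j.1 ((L.get j).1, τ'))) x =
        Ups (L.get j).1.1 τ' x *
          ((∏ j' ∈ Finset.univ.erase j, Ups (L.get j').1.1 (L.get j').2 x) *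
            mpderiv k (Dlist (L.map Prod.fst) (F t l)) x) := by
    intro j τ'
    simp only [hUps t l k (L.set j.1 ((L.get j).1, τ'))]
    rw [map_fst_set L j τ',
      show (∏ j' : Fin (L.set j.1 ((L.get j).1, τ')).length,
          Ups ((L.set j.1 ((L.get j).1, τ')).get j').1.1
            ((L.set j.1 ((L.get j).1, τ')).get j').2 x) =
        Ups ((L.get j).1, τ').1.1 ((L.get j).1, τ').2 x *
          ∏ j' ∈ Finset.univ.erase j, Ups (L.get j').1.1 (L.get j').2 x
        from prod_fin_set L j ((L.get j).1, τ') (fun p => Ups p.1.1 p.2 x)]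
    ring
  simp only [hups']
  have hsum : ∀ j : Fin L.length,
      ((raiseV i (L.get j).2).sum fun τ' c =>
        c * (Ups (L.get j).1.1 τ' x *
          ((∏ j' ∈ Finset.univ.erase j, Ups (L.get j').1.1 (L.get j').2 x) *
            mpderiv k (Dlist (L.map Prod.fst) (F t l)) x))) =
      pderivO i (Ups (L.get j).1.1 (L.get j).2) x *
        ((∏ j' ∈ Finset.univ.erase j, Ups (L.get j').1.1 (L.get j').2 x) *
          mpderiv k (Dlist (L.map Prod.fst) (F t l)) x) := by
    intro j
    have hm : (L.get j) ∈ (↑L : Multiset (Odx Lp d × S.V)) :=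
      Multiset.mem_coe.2 (L.get_mem _)
    rw [show pderivO i (Ups (L.get j).1.1 (L.get j).2) x =
        (raiseV i (L.get j).2).sum (fun τ'' c => c * Ups (L.get j).1.1 τ'' x)
      from congrFun (hIH (L.get j) hm (L.get j).1.1) x]
    rw [Finsupp.sum_mul]
    exact Finsupp.sum_congr fun τ' _ => (mul_assoc _ _ _).symm
  simp only [hsum]
  rw [one_mul, Finset.sum_mul, add_comm]
  congr 1
  exact Finset.sum_congr rfl fun j _ => mul_assoc _ _ _

end SPDERenorm
end

section
/- Lemma ('lem:partialK F vanishes'): Let F ∈ 𝒞_𝒪 and let k ∈ ℕ^{d+1} with k ≠ 0. Then ∂^k F = 0 if and only if F is constant. -/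
/-
Common framework: multi-indices, the algebra of smooth functions on ℝ^𝒪,
and the spaces of decorated trees 𝒱 and 𝔅 of [Bruned–Chandra–Chevyrev–Hairer,
"Renormalising SPDEs in regularity structures"], presented abstractly together
with the defining recursions of the various operators on them.
-/

open scoped BigOperators Classical

namespace SPDERenorm

section Aux
variable {Lp : Type} {d : ℕ} [DecidableEq Lp]

/-- The shift `(𝔱,p) ↦ (𝔱,p+e_i)`. -/
def shiftO (i : Fin (d+1)) (o : Odx Lp d) : Odx Lp d := (o.1, o.2 + munit i)

lemma shiftO_injective (i : Fin (d+1)) : Function.Injective (shiftO (Lp := Lp) (d := d) i) := by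
  intro a b h
  simp only [shiftO, Prod.mk.injEq] at h
  exact Prod.ext h.1 (add_right_cancel h.2)

lemma rep_congr {s : Finset (Odx Lp d)} {g : (↥s → ℝ) → ℝ} {F : FnO Lp d}
    (hrep : ∀ x, F x = g fun o => x o.1) {x y : Odx Lp d → ℝ}
    (h : ∀ j ∈ s, x j = y j) : F x = F y := by
  rw [hrep, hrep]
  congr 1
  funext o
  exact h o.1 o.2

lemma dpart_not_mem {s : Finset (Odx Lp d)} {g : (↥s → ℝ) → ℝ} {F : FnO Lp d}
    (hrep : ∀ x, F x = g fun o => x o.1) {o : Odx Lp d} (ho : o ∉ s) (x : Odx Lp d → ℝ) :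
    Dpart o F x = 0 := by
  have : (fun t : ℝ => F (Function.update x o t)) = fun _ => F x := by
    funext t
    refine rep_congr hrep fun j hj => ?_
    exact Function.update_of_ne (fun h : j = o => ho (h ▸ hj)) _ _
  rw [Dpart, this, deriv_const]

lemma dpart_congr {s : Finset (Odx Lp d)} {g : (↥s → ℝ) → ℝ} {F : FnO Lp d}
    (hrep : ∀ x, F x = g fun o => x o.1) (o : Odx Lp d) {x y : Odx Lp d → ℝ}
    (h : ∀ j ∈ s, x j = y j) : Dpart o F x = Dpart o F y := by
  by_cases ho : o ∈ s
  · have hxy : x o = y o := h o ho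
    have : ∀ t : ℝ, F (Function.update x o t) = F (Function.update y o t) := by
      intro t
      refine rep_congr hrep fun j hj => ?_
      rw [Function.update_apply, Function.update_apply]
      split_ifs with hto
      · rfl
      · exact h j hj
    rw [Dpart, Dpart, hxy]
    congr 1
    funext t
    exact this t
  · rw [dpart_not_mem hrep ho, dpart_not_mem hrep ho]

lemma pderiv_eq_sum {s : Finset (Odx Lp d)} {g : (↥s → ℝ) → ℝ} {F : FnO Lp d}
    (hrep : ∀ x, F x = g fun o => x o.1) (i : Fin (d+1)) (x : Odx Lp d → ℝ) :
    pderivO i F x = ∑ o ∈ s, x (shiftO i o) * Dpart o F x := by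
  rw [pderivO]
  exact finsum_eq_sum_of_support_subset _ fun o ho => by
    by_contra hos
    exact ho (by simp [dpart_not_mem hrep hos x])

lemma dpart_mem_eq {s : Finset (Odx Lp d)} {g : (↥s → ℝ) → ℝ} {F : FnO Lp d}
    (hg : ContDiff ℝ (⊤ : ℕ∞) g) (hrep : ∀ x, F x = g fun o => x o.1)
    {o : Odx Lp d} (ho : o ∈ s) (x : Odx Lp d → ℝ) :
    Dpart o F x = fderiv ℝ g (fun j : ↥s => x j.1) (Pi.single ⟨o, ho⟩ 1) := by
  set y : ↥s → ℝ := fun j => x j.1 with hy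
  have hupd : ∀ t : ℝ, (fun j : ↥s => Function.update x o t j.1)
      = Function.update y ⟨o, ho⟩ t := by
    intro t
    funext j
    rw [Function.update_apply, Function.update_apply]
    by_cases hj : j = ⟨o, ho⟩
    · simp [hj]
    · have hj' : j.1 ≠ o := fun h => hj (Subtype.ext h)
      simp [hj, hj', hy]
  have hder : HasDerivAt (fun t : ℝ => g (Function.update y ⟨o, ho⟩ t))
      (fderiv ℝ g y (Pi.single ⟨o, ho⟩ 1)) (y ⟨o, ho⟩) := by
    have h1 : HasDerivAt (Function.update y ⟨o, ho⟩) (Pi.single ⟨o, ho⟩ 1) (y ⟨o, ho⟩) :=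
      hasDerivAt_update y ⟨o, ho⟩ (y ⟨o, ho⟩)
    have h2 : HasFDerivAt g (fderiv ℝ g y) (Function.update y ⟨o, ho⟩ (y ⟨o, ho⟩)) := by
      rw [Function.update_eq_self]
      exact (hg.differentiable (by simp) y).hasFDerivAt
    exact h2.comp_hasDerivAt _ h1
  have : Dpart o F x = deriv (fun t : ℝ => g (Function.update y ⟨o, ho⟩ t)) (y ⟨o, ho⟩) := by
    rw [Dpart]
    congr 1
    funext t
    rw [hrep, hupd t]
  rw [this, hder.deriv]

lemma dpart_max_eq_zero {s : Finset (Odx Lp d)} {g : (↥s → ℝ) → ℝ} {F : FnO Lp d}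
    (hrep : ∀ x, F x = g fun o => x o.1) {i : Fin (d+1)} (hp : pderivO i F = 0)
    {o : Odx Lp d} (ho : o ∈ s) (hmax : ∀ o' ∈ s, o'.2 i ≤ o.2 i) (x : Odx Lp d → ℝ) :
    Dpart o F x = 0 := by
  have hso : shiftO i o ∉ s := by
    intro h
    have := hmax _ h
    simp [shiftO, munit, Pi.single_eq_same] at this
  have key : ∀ u : ℝ,
      u * Dpart o F x + ∑ o' ∈ s.erase o, x (shiftO i o') * Dpart o' F x = 0 := by
    intro u
    set xu : Odx Lp d → ℝ := Function.update x (shiftO i o) u with hxu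
    have hagree : ∀ j ∈ s, xu j = x j := fun j hj =>
      Function.update_of_ne (fun h : j = shiftO i o => hso (h ▸ hj)) _ _
    have h0 : ∑ o' ∈ s, xu (shiftO i o') * Dpart o' F xu = 0 := by
      rw [← pderiv_eq_sum hrep i xu, hp]
      rfl
    have h1 : ∀ o' ∈ s, xu (shiftO i o') * Dpart o' F xu
        = (if o' = o then u else x (shiftO i o')) * Dpart o' F x := by
      intro o' ho'
      have hD : Dpart o' F xu = Dpart o' F x := dpart_congr hrep o' hagree
      rw [hD]
      congr 1
      rw [hxu, Function.update_apply]
      by_cases h : o' = o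
      · simp [h]
      · have : shiftO i o' ≠ shiftO i o := fun hc => h (shiftO_injective i hc)
        simp [this, h]
    rw [Finset.sum_congr rfl h1] at h0
    rw [← Finset.add_sum_erase _ _ ho] at h0
    simp only [if_pos rfl] at h0
    rw [← h0]
    congr 1
    refine Finset.sum_congr rfl fun o' ho' => ?_
    rw [if_neg (Finset.ne_of_mem_erase ho')]
  have c0 := key 0
  have c1 := key 1
  linarith

lemma F_update_eq {s : Finset (Odx Lp d)} {g : (↥s → ℝ) → ℝ} {F : FnO Lp d}
    (hg : ContDiff ℝ (⊤ : ℕ∞) g) (hrep : ∀ x, F x = g fun o => x o.1)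
    {o : Odx Lp d} (hD : ∀ x, Dpart o F x = 0) (x : Odx Lp d → ℝ) :
    F x = F (Function.update x o 0) := by
  set h : ℝ → ℝ := fun t => F (Function.update x o t) with hh
  have hrw : h = fun t => g (fun j : ↥s => if j.1 = o then t else x j.1) := by
    funext t
    simp only [hh]
    rw [hrep]
    congr 1
    funext j
    rw [Function.update_apply]
  have hdiff : Differentiable ℝ h := by
    rw [hrw]
    refine (hg.differentiable (by simp)).comp ?_
    refine differentiable_pi.mpr fun j => ?_
    by_cases hj : j.1 = o
    · simp only [hj, if_pos rfl]
      exact differentiable_id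
    · simp only [if_neg hj]
      exact differentiable_const _
  have hderiv : ∀ t, deriv h t = 0 := by
    intro t
    have : deriv h t = Dpart o F (Function.update x o t) := by
      rw [Dpart]
      congr 1
      · funext u
        rw [hh, Function.update_idem]
      · rw [Function.update_self]
    rw [this, hD]
  have := is_const_of_deriv_eq_zero hdiff hderiv (x o) 0
  rw [hh] at this
  simpa [Function.update_eq_self] using this

/-- Main lemma A: a smooth function with `∂_i F = 0` is constant. -/
lemma const_of_pderiv_eq_zero_aux (i : Fin (d+1)) :
    ∀ n (s : Finset (Odx Lp d)) (F : FnO Lp d) (g : (↥s → ℝ) → ℝ), s.card ≤ n →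
      ContDiff ℝ (⊤ : ℕ∞) g → (∀ x, F x = g fun o => x o.1) → pderivO i F = 0 →
      ∃ r : ℝ, F = fun _ => r := by
  intro n
  induction n with
  | zero =>
    intro s F g hcard hg hrep _
    have hs : s = ∅ := Finset.card_eq_zero.mp (Nat.le_zero.mp hcard)
    refine ⟨F (fun _ => 0), funext fun x => ?_⟩
    exact rep_congr hrep fun j hj => absurd hj (by simp [hs])
  | succ n ih =>
    intro s F g hcard hg hrep hp
    by_cases hs : s.Nonempty
    · obtain ⟨o, ho, hmax⟩ := Finset.exists_max_image s (fun o => o.2 i) hs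
      have hD : ∀ x, Dpart o F x = 0 := dpart_max_eq_zero hrep hp ho hmax
      set s₂ := s.erase o with hs₂
      set g₂ : (↥s₂ → ℝ) → ℝ := fun y =>
        g (fun j : ↥s => if h : j.1 = o then 0
          else y ⟨j.1, Finset.mem_erase.mpr ⟨h, j.2⟩⟩) with hg₂def
      have hg₂ : ContDiff ℝ (⊤ : ℕ∞) g₂ := by
        refine hg.comp ?_
        refine contDiff_pi.mpr fun j => ?_
        by_cases h : j.1 = o
        · simp only [dif_pos h]
          exact contDiff_const
        · simp only [dif_neg h]
          exact contDiff_apply _ _ _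
      have hrep₂ : ∀ x, F x = g₂ fun o : ↥s₂ => x o.1 := by
        intro x
        rw [F_update_eq hg hrep hD x, hrep, hg₂def]
        congr 1
        funext j
        by_cases h : j.1 = o
        · simp [Function.update_apply, h]
        · simp [Function.update_apply, h]
      have hcard₂ : s₂.card ≤ n := by
        rw [hs₂, Finset.card_erase_of_mem ho]
        omega
      exact ih s₂ F g₂ hcard₂ hg₂ hrep₂ hp
    · refine ⟨F (fun _ => 0), funext fun x => ?_⟩
      exact rep_congr hrep fun j hj =>
        absurd hj (by simp [Finset.not_nonempty_iff_eq_empty.mp hs])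

lemma const_of_pderiv_eq_zero {F : FnO Lp d} (hF : IsSmoothCO F) {i : Fin (d+1)}
    (hp : pderivO i F = 0) : ∃ r : ℝ, F = fun _ => r := by
  obtain ⟨s, g, hg, hrep⟩ := hF
  exact const_of_pderiv_eq_zero_aux i s.card s F g le_rfl hg hrep hp

/-- Lemma B: `𝒞_𝒪` is closed under `∂_i`. -/
lemma isSmoothCO_pderiv {F : FnO Lp d} (hF : IsSmoothCO F) (i : Fin (d+1)) :
    IsSmoothCO (pderivO i F) := by
  obtain ⟨s, g, hg, hrep⟩ := hF
  set s' : Finset (Odx Lp d) := s ∪ s.image (shiftO i) with hs'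
  have hmem₁ : ∀ j : ↥s, j.1 ∈ s' := fun j => Finset.mem_union_left _ j.2
  have hmem₂ : ∀ j : ↥s, shiftO i j.1 ∈ s' := fun j =>
    Finset.mem_union_right _ (Finset.mem_image_of_mem _ j.2)
  set T : (↥s' → ℝ) →L[ℝ] (↥s → ℝ) :=
    ContinuousLinearMap.pi (fun j : ↥s => ContinuousLinearMap.proj ⟨j.1, hmem₁ j⟩) with hT
  set g' : (↥s' → ℝ) → ℝ := fun y =>
    ∑ o ∈ s.attach, y ⟨shiftO i o.1, hmem₂ o⟩ * fderiv ℝ g (T y) (Pi.single o 1) with hg'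
  refine ⟨s', g', ?_, ?_⟩
  · refine ContDiff.sum fun o _ => ContDiff.mul ?_ ?_
    · exact contDiff_apply _ _ _
    · have h1 : ContDiff ℝ (⊤ : ℕ∞) (fun y : ↥s' → ℝ => fderiv ℝ g (T y)) :=
        ((contDiff_infty_iff_fderiv.mp hg).2).comp T.contDiff
      have h2 : ContDiff ℝ (⊤ : ℕ∞)
          (fun L : (↥s → ℝ) →L[ℝ] ℝ => L (Pi.single o 1 : ↥s → ℝ)) :=
        (ContinuousLinearMap.apply ℝ ℝ (Pi.single o 1 : ↥s → ℝ)).contDiff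
      exact h2.comp h1
  · intro x
    rw [pderiv_eq_sum hrep i x, ← Finset.sum_attach s
      (fun o => x (shiftO i o) * Dpart o F x)]
    refine Finset.sum_congr rfl fun o _ => ?_
    rw [dpart_mem_eq hg hrep o.2 x]
    rfl

/-- Evaluating `∂_i H` at the origin gives `0`. -/
lemma pderiv_apply_zero (i : Fin (d+1)) (H : FnO Lp d) :
    pderivO i H (fun _ => 0) = 0 := by
  rw [pderivO]
  have : (fun o : Odx Lp d => Xc (o.1, o.2 + munit i) (fun _ => 0) * Dpart o H fun _ => 0)
      = fun _ => 0 := by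
    funext o
    simp [Xc]
  rw [this, finsum_zero]

lemma pderiv_const (i : Fin (d+1)) (r : ℝ) :
    pderivO i ((fun _ => r) : FnO Lp d) = 0 := by
  funext x
  rw [pderivO]
  have : (fun o : Odx Lp d => Xc (o.1, o.2 + munit i) x * Dpart o (fun _ => r) x)
      = fun _ => 0 := by
    funext o
    simp [Dpart]
  rw [this, finsum_zero]
  rfl

lemma pderiv_zero' (i : Fin (d+1)) : pderivO i (0 : FnO Lp d) = 0 := by
  exact pderiv_const i 0

lemma iterate_pderiv_zero (i : Fin (d+1)) (m : ℕ) :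
    (pderivO (Lp := Lp) (d := d) i)^[m] 0 = 0 :=
  Function.iterate_fixed (pderiv_zero' i) m

lemma isSmoothCO_iterate {F : FnO Lp d} (hF : IsSmoothCO F) (i : Fin (d+1)) (m : ℕ) :
    IsSmoothCO ((pderivO i)^[m] F) := by
  induction m with
  | zero => exact hF
  | succ m ih =>
    rw [Function.iterate_succ_apply']
    exact isSmoothCO_pderiv ih i

lemma isSmoothCO_foldr (k : MIdx d) :
    ∀ (L : List (Fin (d+1))) (F : FnO Lp d), IsSmoothCO F →
      IsSmoothCO (L.foldr (fun i G => (pderivO i)^[k i] G) F) := by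
  intro L
  induction L with
  | nil => exact fun F hF => hF
  | cons i L ih =>
    intro F hF
    exact isSmoothCO_iterate (ih F hF) i (k i)

lemma pderiv_const_eq_zero {i : Fin (d+1)} {H : FnO Lp d} {r : ℝ}
    (h : pderivO i H = fun _ => r) : pderivO i H = 0 := by
  have h0 : r = 0 := by
    have := congrFun h (fun _ => 0)
    rw [pderiv_apply_zero] at this
    exact this.symm
  rw [h, h0]
  rfl

lemma const_of_iterate_const (i : Fin (d+1)) :
    ∀ (m : ℕ) (G : FnO Lp d), IsSmoothCO G →
      (∃ r : ℝ, (pderivO i)^[m] G = fun _ => r) → ∃ r : ℝ, G = fun _ => r := by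
  intro m
  induction m with
  | zero => exact fun G _ h => h
  | succ m ih =>
    intro G hG h
    rw [Function.iterate_succ_apply] at h
    obtain ⟨r, hr⟩ := ih (pderivO i G) (isSmoothCO_pderiv hG i) h
    exact const_of_pderiv_eq_zero hG (pderiv_const_eq_zero hr)

lemma const_of_foldr_const (k : MIdx d) :
    ∀ (L : List (Fin (d+1))) (F : FnO Lp d), IsSmoothCO F →
      (∃ r : ℝ, L.foldr (fun i G => (pderivO i)^[k i] G) F = fun _ => r) →
      ∃ r : ℝ, F = fun _ => r := by
  intro L
  induction L with
  | nil => exact fun F _ h => h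
  | cons i L ih =>
    intro F hF h
    exact ih F hF (const_of_iterate_const i (k i) _ (isSmoothCO_foldr k L F hF) h)

lemma iterate_const (i : Fin (d+1)) (m : ℕ) (r : ℝ) :
    ∃ r' : ℝ, (pderivO (Lp := Lp) (d := d) i)^[m] (fun _ => r) = fun _ => r' := by
  cases m with
  | zero => exact ⟨r, rfl⟩
  | succ m =>
    refine ⟨0, ?_⟩
    rw [Function.iterate_succ_apply, pderiv_const, iterate_pderiv_zero]
    rfl

lemma foldr_const (k : MIdx d) :
    ∀ (L : List (Fin (d+1))) (r : ℝ),
      ∃ r' : ℝ, L.foldr (fun i G => (pderivO (Lp := Lp) (d := d) i)^[k i] G)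
        (fun _ => r) = fun _ => r' := by
  intro L
  induction L with
  | nil => exact fun r => ⟨r, rfl⟩
  | cons i L ih =>
    intro r
    obtain ⟨r', hr'⟩ := ih r
    rw [List.foldr_cons, hr']
    exact iterate_const i (k i) r'

lemma foldr_const_eq_zero (k : MIdx d) :
    ∀ (L : List (Fin (d+1))), (∃ i ∈ L, k i ≠ 0) → ∀ r : ℝ,
      L.foldr (fun i G => (pderivO (Lp := Lp) (d := d) i)^[k i] G) (fun _ => r) = 0 := by
  intro L
  induction L with
  | nil => rintro ⟨i, hi, _⟩; exact absurd hi List.not_mem_nil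
  | cons j L ih =>
    rintro ⟨i, hi, hki⟩ r
    rw [List.foldr_cons]
    by_cases hj : k j = 0
    · have hiL : i ∈ L := by
        rcases List.mem_cons.mp hi with h | h
        · exact absurd (h ▸ hj) hki
        · exact h
      rw [ih ⟨i, hiL, hki⟩ r, hj]
      simp
    · obtain ⟨r', hr'⟩ := foldr_const (Lp := Lp) k L r
      rw [hr']
      obtain ⟨m, hm⟩ := Nat.exists_eq_succ_of_ne_zero hj
      rw [hm, Function.iterate_succ_apply, pderiv_const, iterate_pderiv_zero]

end Aux

/-- Lemma `lem:partialK F vanishes`: for `F ∈ 𝒞_𝒪` and `k ≠ 0`,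
`∂^k F = 0` if and only if `F` is constant. -/
theorem statement11
    {d : ℕ} {Lp : Type} [Fintype Lp] [DecidableEq Lp]
    (F : FnO Lp d) (hF : IsSmoothCO F) (k : MIdx d) (hk : k ≠ 0) :
    mpderiv k F = 0 ↔ ∃ r : ℝ, F = fun _ => r := by
  constructor
  · intro h
    exact const_of_foldr_const k (List.finRange (d+1)) F hF ⟨0, h⟩
  · rintro ⟨r, rfl⟩
    obtain ⟨i, hi⟩ := Function.ne_iff.mp hk
    exact foldr_const_eq_zero k (List.finRange (d+1)) ⟨i, List.mem_finRange i, hi⟩ r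

end SPDERenorm
end
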